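/- arXiv:2002.05859 — 12 statements merged into one kernel-verified Lean document; each statement's English description precedes it below -/
import Mathlib

section
/- Let V be an n-dimensional vector space over 𝔽_q and let ℱ be an intersecting family of m-dimensional subspaces of V. If S is an s-dimensional subspace of V such that some F ∈ ℱ satisfies F ∩ S = 0, then there exists an (s+1)-dimensional subspace T of V such that |ℱ_T| ≥ |ℱ_S| / [m over 1]_q. -/
open Module

/-- The Gaussian binomial coefficient `[n over m]_q`, as a rational number. -/
def gaussBinom (q n m : ℕ) : ℚ :=
  ∏ i ∈ Finset.range m, ((q : ℚ) ^ (n - i) - 1) / ((q : ℚ) ^ (m - i) - 1)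

/-- A family of subspaces is intersecting if any two of its members have intersection
of dimension at least 1. -/
def IsIntersectingFamily {F V : Type*} [Field F] [AddCommGroup V] [Module F V]
    (𝒜 : Set (Submodule F V)) : Prop :=
  ∀ A ∈ 𝒜, ∀ B ∈ 𝒜, 1 ≤ finrank F ↥(A ⊓ B)

/-- The covering number of a family of subspaces: the minimum dimension of a subspace
intersecting every member of the family. -/
noncomputable def coveringNumber {F V : Type*} [Field F] [AddCommGroup V] [Module F V]
    (𝒜 : Set (Submodule F V)) : ℕ :=
  sInf { d : ℕ | ∃ W : Submodule F V, finrank F ↥W = d ∧ ∀ A ∈ 𝒜, 1 ≤ finrank F ↥(W ⊓ A) }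

theorem stmt2 {F V : Type*} [Field F] [Fintype F] [AddCommGroup V] [Module F V]
    [FiniteDimensional F V] {q m n s : ℕ} (hq : Fintype.card F = q) (hV : finrank F V = n)
    (ℱ : Set (Submodule F V)) (hdim : ∀ A ∈ ℱ, finrank F ↥A = m)
    (hint : IsIntersectingFamily ℱ)
    (S : Submodule F V) (hS : finrank F ↥S = s)
    (hmiss : ∃ A ∈ ℱ, finrank F ↥(A ⊓ S) = 0) :
    ∃ T : Submodule F V, finrank F ↥T = s + 1 ∧
      ({G | G ∈ ℱ ∧ S ≤ G}.ncard : ℚ) / gaussBinom q m 1 ≤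
        ({G | G ∈ ℱ ∧ T ≤ G}.ncard : ℚ) := by
  classical
  obtain ⟨A, hA, hASrk⟩ := hmiss
  haveI : Finite V := Module.finite_of_finite F
  haveI : Fintype V := Fintype.ofFinite V
  haveI : Fintype (Submodule F V) := Fintype.ofFinite _
  have hq2 : 2 ≤ q := hq ▸ Fintype.one_lt_card
  have hm1 : 1 ≤ m := by
    have h := hint A hA A hA
    rwa [inf_idem, hdim A hA] at h
  have hAS : A ⊓ S = ⊥ := Submodule.finrank_eq_zero.mp hASrk
  -- nonzero vectors of A
  set X : Finset V := (A : Set V).toFinset.erase 0 with hXdef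
  have hmemX : ∀ v, v ∈ X ↔ v ≠ 0 ∧ v ∈ A := by
    intro v; simp [hXdef]
  have hcard_sub : ∀ (W : Submodule F V),
      ((W : Set V).toFinset.erase 0).card = q ^ (finrank F W) - 1 := by
    intro W
    have h0 : (0 : V) ∈ (W : Set V).toFinset := by simp
    rw [Finset.card_erase_of_mem h0]
    congr 1
    rw [Set.toFinset_card]
    have : Fintype.card (W : Set V) = Fintype.card W := Fintype.card_congr (Equiv.refl _)
    rw [this, card_eq_pow_finrank (K := F), hq]
  have hXcard : X.card = q ^ m - 1 := by
    rw [hXdef, hcard_sub A, hdim A hA]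
  have hXne : X.Nonempty := by
    rw [← Finset.card_pos, hXcard]
    have : q ≤ q ^ m := Nat.le_self_pow (by omega) q
    omega
  -- the function
  set f : V → ℕ := fun v => {G | G ∈ ℱ ∧ S ⊔ Submodule.span F {v} ≤ G}.toFinset.card with hfdef
  obtain ⟨v₀, hv₀X, hv₀max⟩ := Finset.exists_max_image X f hXne
  obtain ⟨hv₀ne, hv₀A⟩ := (hmemX v₀).mp hv₀X
  have hv₀S : v₀ ∉ S := fun h => hv₀ne (by
    have : v₀ ∈ A ⊓ S := ⟨hv₀A, h⟩
    rwa [hAS, Submodule.mem_bot] at this)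
  refine ⟨S ⊔ Submodule.span F {v₀}, ?_, ?_⟩
  · have hdisj : S ⊓ Submodule.span F {v₀} = ⊥ := by
      rw [← disjoint_iff]
      exact Submodule.disjoint_span_singleton.mpr (fun h => absurd h hv₀S)
    have h := Submodule.finrank_sup_add_finrank_inf_eq S (Submodule.span F {v₀})
    rw [hdisj, finrank_bot, finrank_span_singleton hv₀ne, hS] at h
    omega
  · -- main counting
    set 𝒢 : Finset (Submodule F V) := {G | G ∈ ℱ ∧ S ≤ G}.toFinset with h𝒢def
    have key : (q - 1) * 𝒢.card ≤ (q ^ m - 1) * f v₀ := by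
      have step1 : (q - 1) * 𝒢.card ≤ ∑ G ∈ 𝒢, (X.filter (fun v => v ∈ G)).card := by
        rw [mul_comm, Finset.card_eq_sum_ones 𝒢, Finset.sum_mul, one_mul]
        refine Finset.sum_le_sum ?_
        intro G hG
        rw [h𝒢def, Set.mem_toFinset] at hG
        have hW : 1 ≤ finrank F ↥(A ⊓ G) := hint A hA G hG.1
        have hsub : ((A ⊓ G : Submodule F V) : Set V).toFinset.erase 0 ⊆
            X.filter (fun v => v ∈ G) := by
          intro v hv
          rw [Finset.mem_erase, Set.mem_toFinset] at hv
          obtain ⟨hvA, hvG⟩ := Submodule.mem_inf.mp hv.2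
          rw [Finset.mem_filter]
          exact ⟨(hmemX v).mpr ⟨hv.1, hvA⟩, hvG⟩
        calc q - 1 ≤ q ^ (finrank F ↥(A ⊓ G)) - 1 := by
              have : q ≤ q ^ (finrank F ↥(A ⊓ G)) := Nat.le_self_pow (by omega) q
              omega
          _ = (((A ⊓ G : Submodule F V) : Set V).toFinset.erase 0).card :=
              (hcard_sub _).symm
          _ ≤ _ := Finset.card_le_card hsub
      have step2 : ∑ G ∈ 𝒢, (X.filter (fun v => v ∈ G)).card
          = ∑ v ∈ X, (𝒢.filter (fun G => v ∈ G)).card := by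
        simp_rw [Finset.card_filter]
        exact Finset.sum_comm
      have step3 : ∀ v ∈ X, (𝒢.filter (fun G => v ∈ G)).card ≤ f v₀ := by
        intro v hv
        refine le_trans ?_ (hv₀max v hv)
        rw [hfdef]
        apply Finset.card_le_card
        intro G hG
        rw [Finset.mem_filter, h𝒢def, Set.mem_toFinset] at hG
        rw [Set.mem_toFinset]
        exact ⟨hG.1.1, sup_le hG.1.2 ((Submodule.span_singleton_le_iff_mem v G).mpr hG.2)⟩
      calc (q - 1) * 𝒢.card ≤ ∑ v ∈ X, (𝒢.filter (fun G => v ∈ G)).card :=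
            step1.trans step2.le
        _ ≤ ∑ _v ∈ X, f v₀ := Finset.sum_le_sum step3
        _ = (q ^ m - 1) * f v₀ := by rw [Finset.sum_const, smul_eq_mul, hXcard]
    -- convert to ℚ
    have hncard1 : {G | G ∈ ℱ ∧ S ≤ G}.ncard = 𝒢.card := Set.ncard_eq_toFinset_card' _
    have hncard2 : {G | G ∈ ℱ ∧ S ⊔ Submodule.span F {v₀} ≤ G}.ncard = f v₀ :=
      Set.ncard_eq_toFinset_card' _
    rw [hncard1, hncard2]
    simp only [gaussBinom, Finset.prod_range_one, Nat.sub_zero, pow_zero, pow_one]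
    have hq1 : (1 : ℚ) < (q : ℚ) := by exact_mod_cast by omega
    have hqm1 : (1 : ℚ) < (q : ℚ) ^ m := by
      calc (1:ℚ) < q := hq1
        _ ≤ (q:ℚ) ^ m := le_self_pow₀ (by linarith) (by omega)
    have hpos : (0 : ℚ) < ((q : ℚ) ^ m - 1) / ((q : ℚ) - 1) := by
      apply div_pos <;> linarith
    rw [div_le_iff₀ hpos]
    have keyQ : ((q : ℚ) - 1) * 𝒢.card ≤ ((q : ℚ) ^ m - 1) * f v₀ := by
      have h1 : (((q - 1) * 𝒢.card : ℕ) : ℚ) ≤ (((q ^ m - 1) * f v₀ : ℕ) : ℚ) :=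
        Nat.cast_le.mpr key
      rw [Nat.cast_mul, Nat.cast_mul, Nat.cast_sub (by omega),
        Nat.cast_sub (show 1 ≤ q ^ m from Nat.one_le_pow _ _ (by omega))] at h1
      push_cast at h1 ⊢
      linarith
    rw [mul_div_assoc']
    rw [le_div_iff₀ (by linarith)]
    calc (𝒢.card : ℚ) * ((q:ℚ) - 1) = ((q:ℚ) - 1) * 𝒢.card := by ring
      _ ≤ ((q:ℚ)^m - 1) * f v₀ := keyQ
      _ = (f v₀ : ℚ) * ((q:ℚ)^m - 1) := by ring
end

section
/- Let V be an n-dimensional vector space over 𝔽_q and let ℱ be an intersecting family of m-dimensional subspaces of V with covering number τ(ℱ) = m. Suppose s ≤ t ≤ m. Then for any s-dimensional subspace S of V there exists a t-dimensional subspace T of V such that |ℱ_S| ≤ [m over 1]_q^{t−s} · |ℱ_T|. Moreover, |ℱ_S| ≤ [m over 1]_q^{m−s}. -/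
open Module

section Aux

variable {K V : Type*} [Field K] [Fintype K] [AddCommGroup V] [Module K V]
    [FiniteDimensional K V]

lemma gaussBinom_one_eq (q m : ℕ) :
    gaussBinom q m 1 = ((q : ℚ) ^ m - 1) / ((q : ℚ) - 1) := by
  simp [gaussBinom]

lemma ncard_nonzero_submodule (q : ℕ) (hq : Fintype.card K = q) (A : Submodule K V) :
    ((A : Set V) \ {0}).ncard = q ^ finrank K ↥A - 1 := by
  have hfinV : Finite V := Module.finite_of_finite K
  have hA : Nat.card ↥A = q ^ finrank K ↥A := by
    have : Fintype ↥A := Fintype.ofFinite _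
    rw [Nat.card_eq_fintype_card, card_eq_pow_finrank (K := K), hq]
  rw [Set.ncard_diff_singleton_of_mem (by simp)]
  rw [← Nat.card_coe_set_eq]
  simp only [SetLike.coe_sort_coe]
  rw [hA]

lemma covering_step {q m s : ℕ} (hq : Fintype.card K = q)
    (ℱ : Set (Submodule K V)) (hdim : ∀ A ∈ ℱ, finrank K ↥A = m)
    (hint : IsIntersectingFamily ℱ) (hτ : coveringNumber ℱ = m)
    (hsm : s < m) (S : Submodule K V) (hS : finrank K ↥S = s) :
    ∃ S' : Submodule K V, finrank K ↥S' = s + 1 ∧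
      ({G | G ∈ ℱ ∧ S ≤ G}.ncard : ℚ) ≤
        gaussBinom q m 1 * ({G | G ∈ ℱ ∧ S' ≤ G}.ncard : ℚ) := by
  classical
  have hfinV : Finite V := Module.finite_of_finite K
  have hfinSub : Finite (Submodule K V) :=
    Finite.of_injective (fun p => (p : Set V)) SetLike.coe_injective
  have hq2 : 2 ≤ q := hq ▸ Fintype.one_lt_card
  -- a member of ℱ avoiding S
  obtain ⟨W, hWF, hSW⟩ : ∃ W ∈ ℱ, S ⊓ W = ⊥ := by
    by_contra h
    push_neg at h
    have hle : coveringNumber ℱ ≤ s := by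
      apply Nat.sInf_le
      refine ⟨S, hS, fun A hA => ?_⟩
      have h' := h A hA
      have h0 : finrank K ↥(S ⊓ A) ≠ 0 := fun h0 => h' (Submodule.finrank_eq_zero.mp h0)
      omega
    omega
  have hWm : finrank K ↥W = m := hdim W hWF
  -- the finset of nonzero vectors of W
  set Bs : Set V := (W : Set V) \ {0} with hBsdef
  set B : Finset V := (Set.toFinite Bs).toFinset with hBdef
  have hBcard : B.card = q ^ m - 1 := by
    rw [← Set.ncard_eq_toFinset_card Bs (Set.toFinite Bs),
      ncard_nonzero_submodule q hq W, hWm]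
  have hBmem : ∀ x, x ∈ B ↔ x ∈ W ∧ x ≠ 0 := by
    intro x
    simp [hBdef, hBsdef]
  have hBne : B.Nonempty := by
    obtain ⟨x, hxW, hx0⟩ := Submodule.ne_bot_iff W |>.mp (by
      intro hbot
      rw [hbot, finrank_bot] at hWm
      omega)
    exact ⟨x, (hBmem x).mpr ⟨hxW, hx0⟩⟩
  -- the family above S, as a finset
  set As : Set (Submodule K V) := {G | G ∈ ℱ ∧ S ≤ G} with hAsdef
  set A : Finset (Submodule K V) := (Set.toFinite As).toFinset with hAdef
  have hAcard : As.ncard = A.card := Set.ncard_eq_toFinset_card As (Set.toFinite As)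
  have hAmem : ∀ G, G ∈ A ↔ G ∈ ℱ ∧ S ≤ G := by
    intro G; simp [hAdef, hAsdef]
  -- the candidate extensions and their counts
  set f : V → ℕ := fun x => {G | G ∈ ℱ ∧ S ⊔ Submodule.span K {x} ≤ G}.ncard with hfdef
  obtain ⟨x₀, hx₀B, hx₀max⟩ := B.exists_max_image f hBne
  obtain ⟨hx₀W, hx₀0⟩ := (hBmem x₀).mp hx₀B
  have hx₀S : x₀ ∉ S := by
    intro hx
    have : x₀ ∈ S ⊓ W := ⟨hx, hx₀W⟩
    rw [hSW] at this
    exact hx₀0 this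
  refine ⟨S ⊔ Submodule.span K {x₀}, ?_, ?_⟩
  · have hdisj : S ⊓ Submodule.span K {x₀} = ⊥ :=
      ((Submodule.disjoint_span_singleton' hx₀0).mpr hx₀S).eq_bot
    have := Submodule.finrank_sup_add_finrank_inf_eq S (Submodule.span K {x₀})
    rw [hdisj, finrank_bot, hS, finrank_span_singleton hx₀0] at this
    omega
  -- the counting argument
  have key : (q - 1) * A.card ≤ B.card * f x₀ := by
    calc (q - 1) * A.card = ∑ _G ∈ A, (q - 1) := by
          rw [Finset.sum_const, smul_eq_mul, mul_comm]
      _ ≤ ∑ G ∈ A, (B.filter (fun x => x ∈ G)).card := by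
          apply Finset.sum_le_sum
          intro G hG
          obtain ⟨hGF, hSG⟩ := (hAmem G).mp hG
          have h1 : 1 ≤ finrank K ↥(G ⊓ W) := hint G hGF W hWF
          have hsub : ((G ⊓ W : Submodule K V) : Set V) \ {0} ⊆
              ↑(B.filter (fun x => x ∈ G)) := by
            intro x hx
            obtain ⟨hxGW, hx0⟩ := hx
            simp only [Finset.coe_filter, Set.mem_setOf_eq]
            exact ⟨(hBmem x).mpr ⟨hxGW.2, by simpa using hx0⟩, hxGW.1⟩
          have hcard := Set.ncard_le_ncard hsub (Finset.finite_toSet _)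
          rw [ncard_nonzero_submodule q hq (G ⊓ W), Set.ncard_coe_finset] at hcard
          have hqle : q ≤ q ^ finrank K ↥(G ⊓ W) :=
            Nat.le_self_pow (by omega) q
          omega
      _ = ∑ x ∈ B, (A.filter (fun G => x ∈ G)).card := by
          simp only [Finset.card_filter]
          exact Finset.sum_comm
      _ ≤ ∑ x ∈ B, f x₀ := by
          apply Finset.sum_le_sum
          intro x hxB
          have hstep : (A.filter (fun G => x ∈ G)).card ≤ f x := by
            rw [hfdef]
            have hsub : ↑(A.filter (fun G => x ∈ G)) ⊆
                {G | G ∈ ℱ ∧ S ⊔ Submodule.span K {x} ≤ G} := by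
              intro G hG
              simp only [Finset.coe_filter, Set.mem_setOf_eq] at hG
              obtain ⟨hGA, hxG⟩ := hG
              obtain ⟨hGF, hSG⟩ := (hAmem G).mp hGA
              exact ⟨hGF, sup_le hSG ((Submodule.span_singleton_le_iff_mem x G).mpr hxG)⟩
            have := Set.ncard_le_ncard hsub (Set.toFinite _)
            rwa [Set.ncard_coe_finset] at this
          exact hstep.trans (hx₀max x hxB)
      _ = B.card * f x₀ := by rw [Finset.sum_const, smul_eq_mul]
  -- convert to rationals
  rw [hBcard] at key
  have h1q : (0 : ℚ) < (q : ℚ) - 1 := by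
    have : (2 : ℚ) ≤ (q : ℚ) := by exact_mod_cast hq2
    linarith
  have hqm1 : 1 ≤ q ^ m := Nat.one_le_pow _ _ (by omega)
  have hkeyQ : ((q : ℚ) - 1) * (A.card : ℚ) ≤ ((q : ℚ) ^ m - 1) * (f x₀ : ℚ) := by
    have := (Nat.cast_le (α := ℚ)).mpr key
    push_cast [Nat.cast_sub (by omega : 1 ≤ q), Nat.cast_sub hqm1] at this
    push_cast
    linarith
  rw [gaussBinom_one_eq, hAcard]
  rw [div_mul_eq_mul_div, le_div_iff₀ h1q]
  calc (A.card : ℚ) * ((q : ℚ) - 1) = ((q : ℚ) - 1) * (A.card : ℚ) := by ring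
    _ ≤ ((q : ℚ) ^ m - 1) * (f x₀ : ℚ) := hkeyQ
    _ = ((q : ℚ) ^ m - 1) * (({G | G ∈ ℱ ∧ S ⊔ Submodule.span K {x₀} ≤ G}.ncard : ℚ)) := rfl

lemma gaussBinom_one_nonneg {q : ℕ} (m : ℕ) (hq2 : 2 ≤ q) : 0 ≤ gaussBinom q m 1 := by
  rw [gaussBinom_one_eq]
  have h1 : (1 : ℚ) ≤ (q : ℚ) ^ m := by
    apply one_le_pow₀
    exact_mod_cast (by omega : 1 ≤ q)
  have h2 : (0 : ℚ) < (q : ℚ) - 1 := by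
    have : (2 : ℚ) ≤ (q : ℚ) := by exact_mod_cast hq2
    linarith
  exact div_nonneg (by linarith) h2.le

lemma covering_iter {q m : ℕ} (hq : Fintype.card K = q)
    (ℱ : Set (Submodule K V)) (hdim : ∀ A ∈ ℱ, finrank K ↥A = m)
    (hint : IsIntersectingFamily ℱ) (hτ : coveringNumber ℱ = m) :
    ∀ k s : ℕ, ∀ S : Submodule K V, finrank K ↥S = s → s + k ≤ m →
      ∃ T : Submodule K V, finrank K ↥T = s + k ∧
        ({G | G ∈ ℱ ∧ S ≤ G}.ncard : ℚ) ≤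
          gaussBinom q m 1 ^ k * ({G | G ∈ ℱ ∧ T ≤ G}.ncard : ℚ) := by
  intro k
  induction k with
  | zero =>
    intro s S hS _
    exact ⟨S, by simpa using hS, by simp⟩
  | succ k ih =>
    intro s S hS hsm
    have hq2 : 2 ≤ q := hq ▸ Fintype.one_lt_card
    obtain ⟨S', hS', hle⟩ := covering_step hq ℱ hdim hint hτ (by omega) S hS
    obtain ⟨T, hT, hle'⟩ := ih (s + 1) S' hS' (by omega)
    refine ⟨T, by omega, ?_⟩
    calc ({G | G ∈ ℱ ∧ S ≤ G}.ncard : ℚ)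
        ≤ gaussBinom q m 1 * ({G | G ∈ ℱ ∧ S' ≤ G}.ncard : ℚ) := hle
      _ ≤ gaussBinom q m 1 * (gaussBinom q m 1 ^ k * ({G | G ∈ ℱ ∧ T ≤ G}.ncard : ℚ)) :=
          mul_le_mul_of_nonneg_left hle' (gaussBinom_one_nonneg m hq2)
      _ = gaussBinom q m 1 ^ (k + 1) * ({G | G ∈ ℱ ∧ T ≤ G}.ncard : ℚ) := by ring

end Aux

theorem stmt3 {F V : Type*} [Field F] [Fintype F] [AddCommGroup V] [Module F V]
    [FiniteDimensional F V] {q m n s t : ℕ} (hq : Fintype.card F = q) (hV : finrank F V = n)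
    (ℱ : Set (Submodule F V)) (hdim : ∀ A ∈ ℱ, finrank F ↥A = m)
    (hint : IsIntersectingFamily ℱ) (hτ : coveringNumber ℱ = m)
    (hst : s ≤ t) (htm : t ≤ m) :
    ∀ S : Submodule F V, finrank F ↥S = s →
      (∃ T : Submodule F V, finrank F ↥T = t ∧
        ({G | G ∈ ℱ ∧ S ≤ G}.ncard : ℚ) ≤
          gaussBinom q m 1 ^ (t - s) * ({G | G ∈ ℱ ∧ T ≤ G}.ncard : ℚ)) ∧
      ({G | G ∈ ℱ ∧ S ≤ G}.ncard : ℚ) ≤ gaussBinom q m 1 ^ (m - s) := by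
  intro S hS
  have hq2 : 2 ≤ q := hq ▸ Fintype.one_lt_card
  constructor
  · obtain ⟨T, hT, hle⟩ :=
      covering_iter hq ℱ hdim hint hτ (t - s) s S hS (by omega)
    have hts : s + (t - s) = t := by omega
    rw [hts] at hT
    exact ⟨T, hT, hle⟩
  · obtain ⟨T, hT, hle⟩ :=
      covering_iter hq ℱ hdim hint hτ (m - s) s S hS (by omega)
    have hms : s + (m - s) = m := by omega
    rw [hms] at hT
    have hone : ({G | G ∈ ℱ ∧ T ≤ G}.ncard : ℚ) ≤ 1 := by
      have hsub : {G | G ∈ ℱ ∧ T ≤ G} ⊆ {T} := by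
        intro G ⟨hGF, hTG⟩
        have : T = G := Submodule.eq_of_le_of_finrank_le hTG (by rw [hdim G hGF, hT])
        simp [this.symm]
      have := Set.ncard_le_ncard hsub (Set.finite_singleton T)
      rw [Set.ncard_singleton] at this
      exact_mod_cast this
    calc ({G | G ∈ ℱ ∧ S ≤ G}.ncard : ℚ)
        ≤ gaussBinom q m 1 ^ (m - s) * ({G | G ∈ ℱ ∧ T ≤ G}.ncard : ℚ) := hle
      _ ≤ gaussBinom q m 1 ^ (m - s) * 1 :=
          mul_le_mul_of_nonneg_left hone (pow_nonneg (gaussBinom_one_nonneg m hq2) _)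
      _ = gaussBinom q m 1 ^ (m - s) := by ring
end

section
/- Let V be an n-dimensional vector space over 𝔽_q with m ≥ 2, and let ℱ be a nonempty intersecting family of m-dimensional subspaces of V with covering number τ(ℱ) = m. Let X = Σ_{F ∈ ℱ} F be the subspace spanned by all members of ℱ. Then dim(X) ≥ 2m − 1. -/
open Module

/-- In a finite-dimensional vector space, there is a submodule of any finrank up to the
dimension. -/
lemma exists_submodule_finrank_eq {F V : Type*} [Field F] [AddCommGroup V] [Module F V]
    [FiniteDimensional F V] {k : ℕ} (hk : k ≤ finrank F V) :
    ∃ W : Submodule F V, finrank F ↥W = k := by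
  classical
  set b := finBasis F V
  refine ⟨Submodule.span F (Set.range fun i : Fin k => b (Fin.castLE hk i)), ?_⟩
  have hli : LinearIndependent F (fun i : Fin k => b (Fin.castLE hk i)) :=
    b.linearIndependent.comp _ (Fin.castLE_injective hk)
  rw [finrank_span_eq_card hli, Fintype.card_fin]

lemma exists_le_finrank_eq {F V : Type*} [Field F] [AddCommGroup V] [Module F V]
    [FiniteDimensional F V] (X : Submodule F V) {k : ℕ} (hk : k ≤ finrank F ↥X) :
    ∃ W : Submodule F V, W ≤ X ∧ finrank F ↥W = k := by
  obtain ⟨W', hW'⟩ := exists_submodule_finrank_eq (F := F) (V := ↥X) hk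
  refine ⟨W'.map X.subtype, Submodule.map_subtype_le X W', ?_⟩
  rw [Submodule.finrank_map_subtype_eq, hW']

theorem stmt4 {F V : Type*} [Field F] [Fintype F] [AddCommGroup V] [Module F V]
    [FiniteDimensional F V] {m n : ℕ} (hm : 2 ≤ m) (hV : finrank F V = n)
    (ℱ : Set (Submodule F V)) (hne : ℱ.Nonempty)
    (hdim : ∀ A ∈ ℱ, finrank F ↥A = m)
    (hint : IsIntersectingFamily ℱ) (hτ : coveringNumber ℱ = m) :
    2 * m - 1 ≤ finrank F ↥(sSup ℱ) := by
  classical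
  set X := sSup ℱ with hX
  obtain ⟨A, hA⟩ := hne
  have hAX : A ≤ X := le_sSup hA
  have hmX : m ≤ finrank F ↥X := by
    rw [← hdim A hA]; exact Submodule.finrank_mono hAX
  set d := finrank F ↥X - m + 1 with hd
  have hdle : d ≤ finrank F ↥X := by omega
  obtain ⟨W, hWX, hWd⟩ := exists_le_finrank_eq X hdle
  -- W covers every member of ℱ
  have hcov : ∀ B ∈ ℱ, 1 ≤ finrank F ↥(W ⊓ B) := by
    intro B hB
    have hBX : B ≤ X := le_sSup hB
    have hsup : finrank F ↥(W ⊔ B) ≤ finrank F ↥X :=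
      Submodule.finrank_mono (sup_le hWX hBX)
    have heq := Submodule.finrank_sup_add_finrank_inf_eq W B
    rw [hWd, hdim B hB] at heq
    omega
  have hle : coveringNumber ℱ ≤ d := Nat.sInf_le ⟨W, hWd, hcov⟩
  rw [hτ] at hle
  omega
end

section
/- Let V be an n-dimensional vector space over 𝔽_q with m ≥ 2, and let ℱ be a nonempty intersecting family of m-dimensional subspaces of V with covering number τ(ℱ) = m. Let X = Σ_{F ∈ ℱ} F. If dim(X) = 2m − 1, then |ℱ| ≤ [2m−1 over m]_q, and equality holds if and only if ℱ is the family of all m-dimensional subspaces of X. -/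
open Module

lemma aux_gauss {q N k : ℕ} (hq : 2 ≤ q) (hk : k ≤ N) :
    gaussBinom q N k =
      ((∏ i ∈ Finset.range k, (q ^ N - q ^ i) : ℕ) : ℚ) /
        ((∏ i ∈ Finset.range k, (q ^ k - q ^ i) : ℕ) : ℚ) := by
  have hq0 : (0:ℚ) < (q:ℚ) := by exact_mod_cast (by omega : 0 < q)
  have key : ∀ M, k ≤ M → ((∏ i ∈ Finset.range k, (q ^ M - q ^ i) : ℕ) : ℚ)
      = (∏ i ∈ Finset.range k, (q:ℚ)^i) * ∏ i ∈ Finset.range k, ((q:ℚ)^(M-i) - 1) := by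
    intro M hM
    rw [Nat.cast_prod, ← Finset.prod_mul_distrib]
    refine Finset.prod_congr rfl fun i hi => ?_
    have hiM : i ≤ M := (Finset.mem_range.mp hi).le.trans hM
    rw [Nat.cast_sub (Nat.pow_le_pow_right (by omega) hiM), mul_sub, mul_one, ← pow_add,
      Nat.add_sub_cancel' hiM]
    push_cast
    ring
  have hA : (∏ i ∈ Finset.range k, (q:ℚ)^i) ≠ 0 := by
    apply Finset.prod_ne_zero_iff.mpr
    intro i _
    exact pow_ne_zero _ (ne_of_gt hq0)
  rw [key N hk, key k le_rfl, mul_div_mul_left _ _ hA, gaussBinom, Finset.prod_div_distrib]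

lemma aux_card_subspaces_mul {F W : Type*} [Field F] [Fintype F] [AddCommGroup W] [Module F W]
    [FiniteDimensional F W] {k : ℕ} (hk : k ≤ finrank F W) :
    Nat.card {p : Submodule F W // finrank F ↥p = k} *
      ∏ i : Fin k, (Fintype.card F ^ k - Fintype.card F ^ (i : ℕ)) =
      ∏ i : Fin k, (Fintype.card F ^ finrank F W - Fintype.card F ^ (i : ℕ)) := by
  have hW : Finite W := Module.finite_of_finite F
  classical
  set S := {s : Fin k → W // LinearIndependent F s}
  set P := {p : Submodule F W // finrank F ↥p = k}
  have hsub : Finite (Submodule F W) := Finite.of_injective _ SetLike.coe_injective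
  have hφdim : ∀ s : S, finrank F ↥(Submodule.span F (Set.range s.1)) = k := by
    intro s
    rw [finrank_span_eq_card s.2, Fintype.card_fin]
  let φ : S → P := fun s => ⟨Submodule.span F (Set.range s.1), hφdim s⟩
  have fiber_equiv : ∀ p : P, {s : S // φ s = p} ≃ {t : Fin k → ↥p.1 // LinearIndependent F t} := by
    intro p
    refine
      { toFun := fun s => ⟨fun i => ⟨s.1.1 i, ?_⟩, ?_⟩
        invFun := fun t => ⟨⟨fun i => (t.1 i : W), ?_⟩, ?_⟩
        left_inv := ?_
        right_inv := ?_ }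
    · have : Submodule.span F (Set.range s.1.1) = p.1 := congrArg Subtype.val s.2
      exact this ▸ Submodule.subset_span (Set.mem_range_self i)
    · exact LinearIndependent.of_comp p.1.subtype s.1.2
    · exact t.2.map' p.1.subtype p.1.ker_subtype
    · have hspan : Submodule.span F (Set.range t.1) = ⊤ := by
        apply Submodule.eq_top_of_finrank_eq
        rw [finrank_span_eq_card t.2, Fintype.card_fin, p.2]
      apply Subtype.ext
      show Submodule.span F (Set.range fun i => ((t.1 i : W))) = p.1
      have : (Set.range fun i => ((t.1 i : W))) = p.1.subtype '' (Set.range t.1) := by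
        ext x; simp [Submodule.subtype]
      rw [this, ← Submodule.map_span, hspan, Submodule.map_subtype_top]
    · intro s; ext i; rfl
    · intro t; ext i; rfl
  have fiber_card : ∀ p : P, Nat.card {s : S // φ s = p} =
      ∏ i : Fin k, (Fintype.card F ^ k - Fintype.card F ^ (i : ℕ)) := by
    intro p
    rw [Nat.card_congr (fiber_equiv p)]
    have := card_linearIndependent (K := F) (V := ↥p.1) (k := k) (by rw [p.2])
    rwa [p.2] at this
  have hS : Nat.card S = ∏ i : Fin k, (Fintype.card F ^ finrank F W - Fintype.card F ^ (i : ℕ)) :=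
    card_linearIndependent hk
  have : Nat.card S = Nat.card P * ∏ i : Fin k, (Fintype.card F ^ k - Fintype.card F ^ (i : ℕ)) := by
    have := Fintype.ofFinite P
    have := Fintype.ofFinite S
    rw [Nat.card_eq_fintype_card, Fintype.card_congr (Equiv.sigmaFiberEquiv φ).symm,
      Fintype.card_sigma]
    simp only [← Nat.card_eq_fintype_card, fiber_card]
    rw [Finset.sum_const, Finset.card_univ, smul_eq_mul]
    simp [Nat.card_eq_fintype_card]
  rw [← this, hS]

lemma aux_card_subspaces {F W : Type*} [Field F] [Fintype F] [AddCommGroup W] [Module F W]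
    [FiniteDimensional F W] {k : ℕ} (hk : k ≤ finrank F W) :
    (Nat.card {p : Submodule F W // finrank F ↥p = k} : ℚ) =
      gaussBinom (Fintype.card F) (finrank F W) k := by
  set q := Fintype.card F with hqdef
  have hq2 : 2 ≤ q := Fintype.one_lt_card
  have hD : 0 < ∏ i ∈ Finset.range k, (q ^ k - q ^ i) := by
    apply Finset.prod_pos
    intro i hi
    have : q ^ i < q ^ k := Nat.pow_lt_pow_right (by omega) (Finset.mem_range.mp hi)
    omega
  have hmul := aux_card_subspaces_mul (F := F) (W := W) hk
  rw [Fin.prod_univ_eq_prod_range (fun i => q ^ k - q ^ i),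
    Fin.prod_univ_eq_prod_range (fun i => q ^ finrank F W - q ^ i)] at hmul
  rw [aux_gauss hq2 hk, ← hmul]
  push_cast
  rw [mul_div_assoc, div_self, mul_one]
  exact_mod_cast hD.ne'

lemma aux_card_subspaces_le {F V : Type*} [Field F] [Fintype F] [AddCommGroup V] [Module F V]
    [FiniteDimensional F V] (X : Submodule F V) {k : ℕ} (hk : k ≤ finrank F ↥X) :
    ({G : Submodule F V | finrank F ↥G = k ∧ G ≤ X}.ncard : ℚ) =
      gaussBinom (Fintype.card F) (finrank F ↥X) k := by
  have hmap : ∀ G : Submodule F V, G ≤ X → (G.comap X.subtype).map X.subtype = G := by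
    intro G hG
    rw [Submodule.map_comap_subtype, inf_eq_right.mpr hG]
  have e : {p : Submodule F ↥X // finrank F ↥p = k} ≃
      {G : Submodule F V | finrank F ↥G = k ∧ G ≤ X} :=
    { toFun := fun p => ⟨p.1.map X.subtype,
        ⟨by rw [Submodule.finrank_map_subtype_eq]; exact p.2, Submodule.map_subtype_le X p.1⟩⟩
      invFun := fun G => ⟨(G : Submodule F V).comap X.subtype, by
        rw [← Submodule.finrank_map_subtype_eq, hmap _ G.2.2]
        exact G.2.1⟩
      left_inv := fun p =>
        Subtype.ext (Submodule.comap_map_eq_of_injective X.injective_subtype p.1)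
      right_inv := fun G => Subtype.ext (hmap _ G.2.2) }
  rw [← Nat.card_coe_set_eq, ← aux_card_subspaces (F := F) (W := ↥X) hk]
  congr 1
  exact Nat.card_congr e.symm

theorem stmt5 {F V : Type*} [Field F] [Fintype F] [AddCommGroup V] [Module F V]
    [FiniteDimensional F V] {q m n : ℕ} (hq : Fintype.card F = q)
    (hm : 2 ≤ m) (hV : finrank F V = n)
    (ℱ : Set (Submodule F V)) (hne : ℱ.Nonempty)
    (hdim : ∀ A ∈ ℱ, finrank F ↥A = m)
    (hint : IsIntersectingFamily ℱ) (hτ : coveringNumber ℱ = m)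
    (hX : finrank F ↥(sSup ℱ) = 2 * m - 1) :
    (ℱ.ncard : ℚ) ≤ gaussBinom q (2 * m - 1) m ∧
      ((ℱ.ncard : ℚ) = gaussBinom q (2 * m - 1) m ↔
        ℱ = {G : Submodule F V | finrank F ↥G = m ∧ G ≤ sSup ℱ}) := by
  have hFin : Finite (Submodule F V) := by
    have : Finite V := Module.finite_of_finite F
    exact Finite.of_injective _ SetLike.coe_injective
  set X := sSup ℱ with hXdef
  set 𝒢 := {G : Submodule F V | finrank F ↥G = m ∧ G ≤ X} with h𝒢
  have h𝒢fin : 𝒢.Finite := Set.toFinite 𝒢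
  have hsub : ℱ ⊆ 𝒢 := fun A hA => ⟨hdim A hA, le_sSup hA⟩
  have hkX : m ≤ finrank F ↥X := by rw [hX]; omega
  have hcard : (𝒢.ncard : ℚ) = gaussBinom q (2 * m - 1) m := by
    rw [h𝒢, aux_card_subspaces_le X hkX, hX, hq]
  have hle : ℱ.ncard ≤ 𝒢.ncard := Set.ncard_le_ncard hsub h𝒢fin
  constructor
  · rw [← hcard]; exact_mod_cast hle
  · constructor
    · intro h
      have : 𝒢.ncard ≤ ℱ.ncard := by
        have : (ℱ.ncard : ℚ) = (𝒢.ncard : ℚ) := by rw [h, hcard]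
        exact_mod_cast this.ge
      exact Set.eq_of_subset_of_ncard_le hsub this h𝒢fin
    · intro h
      rw [← hcard, h]
end

section
/- Let V be an n-dimensional vector space over 𝔽_q with m ≥ 2, and let ℱ be a nonempty intersecting family of m-dimensional subspaces of V with covering number τ(ℱ) = m. If |ℱ_T| ≤ [m−1 over 1]_q for every (m−1)-dimensional subspace T of V, then |ℱ| ≤ [m−1 over 1]_q · [m over 1]_q^{m−1}. -/
open Module

lemma gaussBinom_one (q k : ℕ) : gaussBinom q k 1 = ((q : ℚ) ^ k - 1) / ((q : ℚ) - 1) := by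
  simp [gaussBinom]

lemma aux_ncard_biUnion_le {α β : Type*} [Finite β] (s : Finset α) (t : α → Set β) :
    (⋃ a ∈ s, t a).ncard ≤ ∑ a ∈ s, (t a).ncard := by
  classical
  induction s using Finset.induction with
  | empty => simp
  | insert _ _ h ih =>
    rename_i a s'
    rw [Finset.sum_insert h]
    have : (⋃ b ∈ insert a s', t b) = t a ∪ ⋃ b ∈ s', t b := by
      simp [Set.iUnion_iUnion_eq_or_left]
    rw [this]
    exact (Set.ncard_union_le _ _).trans (add_le_add_right ih _)

lemma aux_ncard_biUnion_eq {α β : Type*} [Finite β] (s : Finset α) (t : α → Set β)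
    (h : ∀ a ∈ s, ∀ b ∈ s, a ≠ b → Disjoint (t a) (t b)) :
    (⋃ a ∈ s, t a).ncard = ∑ a ∈ s, (t a).ncard := by
  classical
  induction s using Finset.induction with
  | empty => simp
  | insert _ _ hmem ih =>
    rename_i a s'
    rw [Finset.sum_insert hmem]
    have heq : (⋃ b ∈ insert a s', t b) = t a ∪ ⋃ b ∈ s', t b := by
      simp [Set.iUnion_iUnion_eq_or_left]
    rw [heq, Set.ncard_union_eq, ih]
    · intro x hx y hy hxy
      exact h x (Finset.mem_insert_of_mem hx) y (Finset.mem_insert_of_mem hy) hxy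
    · refine Set.disjoint_iUnion_right.2 fun b => Set.disjoint_iUnion_right.2 fun hb => ?_
      exact h a (Finset.mem_insert_self a s') b (Finset.mem_insert_of_mem hb)
        (by rintro rfl; exact hmem hb)

section Lines

variable {F V : Type*} [Field F] [Fintype F] [AddCommGroup V] [Module F V]
  [FiniteDimensional F V]

/-- count of 1-dimensional subspaces of a subspace. -/
lemma lines_count {q : ℕ} (hq : Fintype.card F = q) (W : Submodule F V) :
    {x : Submodule F V | x ≤ W ∧ finrank F ↥x = 1}.ncard * (q - 1)
      = q ^ finrank F ↥W - 1 := by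
  classical
  have hVfin : Finite V := Module.finite_of_finite F
  have : Fintype V := Fintype.ofFinite V
  have hsub : Finite (Submodule F V) :=
    Finite.of_injective (fun W : Submodule F V => (W : Set V)) SetLike.coe_injective
  set L : Set (Submodule F V) := {x : Submodule F V | x ≤ W ∧ finrank F ↥x = 1} with hL
  have hLfin : L.Finite := Set.toFinite _
  -- the nonzero vectors of W
  have hcardW : ((W : Set V)).ncard = q ^ finrank F ↥W := by
    rw [← Nat.card_coe_set_eq, Nat.card_eq_fintype_card]
    rw [← hq]
    exact Module.card_eq_pow_finrank
  have hcardline : ∀ x ∈ hLfin.toFinset, ((x : Set V) \ {0}).ncard = q - 1 := by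
    intro x hx
    rw [Set.Finite.mem_toFinset] at hx
    have h0 : (0 : V) ∈ (x : Set V) := x.zero_mem
    rw [Set.ncard_diff_singleton_of_mem h0]
    have : ((x : Set V)).ncard = q ^ 1 := by
      rw [← Nat.card_coe_set_eq, Nat.card_eq_fintype_card, ← hq, ← hx.2]
      exact Module.card_eq_pow_finrank
    rw [this, pow_one]
  have hunion : ((W : Set V) \ {0}) = ⋃ x ∈ hLfin.toFinset, ((x : Set V) \ {0}) := by
    ext v
    simp only [Set.mem_iUnion, Set.Finite.mem_toFinset, Set.mem_diff, Set.mem_singleton_iff]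
    constructor
    · rintro ⟨hvW, hv0⟩
      refine ⟨Submodule.span F {v}, ⟨?_, finrank_span_singleton hv0⟩,
        Submodule.mem_span_singleton_self v, hv0⟩
      rw [Submodule.span_le, Set.singleton_subset_iff]; exact hvW
    · rintro ⟨x, hx, hvx, hv0⟩
      exact ⟨hx.1 hvx, hv0⟩
  have hdisj : ∀ a ∈ hLfin.toFinset, ∀ b ∈ hLfin.toFinset, a ≠ b →
      Disjoint ((a : Set V) \ {0}) ((b : Set V) \ {0}) := by
    intro a ha b hb hab
    rw [Set.Finite.mem_toFinset] at ha hb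
    rw [Set.disjoint_left]
    rintro v ⟨hva, hv0⟩ ⟨hvb, _⟩
    apply hab
    have h1 : Submodule.span F {v} ≤ a := by
      rw [Submodule.span_le, Set.singleton_subset_iff]; exact hva
    have h2 : Submodule.span F {v} ≤ b := by
      rw [Submodule.span_le, Set.singleton_subset_iff]; exact hvb
    have hsv : finrank F ↥(Submodule.span F {v}) = 1 := finrank_span_singleton hv0
    have ha' : Submodule.span F {v} = a :=
      Submodule.eq_of_le_of_finrank_eq h1 (by rw [hsv, ha.2])
    have hb' : Submodule.span F {v} = b :=
      Submodule.eq_of_le_of_finrank_eq h2 (by rw [hsv, hb.2])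
    rw [← ha', ← hb']
  have := aux_ncard_biUnion_eq hLfin.toFinset (fun x => ((x : Set V) \ {0})) hdisj
  rw [← hunion] at this
  have hW0 : ((W : Set V) \ {0}).ncard = q ^ finrank F ↥W - 1 := by
    rw [Set.ncard_diff_singleton_of_mem W.zero_mem, hcardW]
  rw [hW0, Finset.sum_congr rfl hcardline, Finset.sum_const, smul_eq_mul] at this
  rw [Set.ncard_eq_toFinset_card L hLfin, this]

end Lines

theorem stmt7 {F V : Type*} [Field F] [Fintype F] [AddCommGroup V] [Module F V]
    [FiniteDimensional F V] {q m n : ℕ} (hq : Fintype.card F = q)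
    (hm : 2 ≤ m) (hV : finrank F V = n)
    (ℱ : Set (Submodule F V)) (hne : ℱ.Nonempty)
    (hdim : ∀ A ∈ ℱ, finrank F ↥A = m)
    (hint : IsIntersectingFamily ℱ) (hτ : coveringNumber ℱ = m)
    (hsmall : ∀ T : Submodule F V, finrank F ↥T = m - 1 →
      ({G | G ∈ ℱ ∧ T ≤ G}.ncard : ℚ) ≤ gaussBinom q (m - 1) 1) :
    (ℱ.ncard : ℚ) ≤ gaussBinom q (m - 1) 1 * gaussBinom q m 1 ^ (m - 1) := by
  classical
  have hVfin : Finite V := Module.finite_of_finite F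
  have hsub : Finite (Submodule F V) :=
    Finite.of_injective (fun W : Submodule F V => (W : Set V)) SetLike.coe_injective
  have hq2 : 2 ≤ q := by rw [← hq]; exact Fintype.one_lt_card
  have hq1 : (1 : ℚ) ≤ (q : ℚ) := by exact_mod_cast le_trans one_le_two hq2
  have hqne : (q : ℚ) - 1 ≠ 0 := by
    have : (1 : ℚ) < (q : ℚ) := by exact_mod_cast hq2
    linarith
  set B1 : ℚ := gaussBinom q (m - 1) 1 with hB1
  set Bm : ℚ := gaussBinom q m 1 with hBm
  have hBmval : Bm = ((q : ℚ) ^ m - 1) / ((q : ℚ) - 1) := gaussBinom_one q m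
  have key : ∀ j, j ≤ m - 1 → ∀ A : Submodule F V, finrank F ↥A = m - 1 - j →
      ({G | G ∈ ℱ ∧ A ≤ G}.ncard : ℚ) ≤ B1 * Bm ^ j := by
    intro j
    induction j with
    | zero =>
      intro _ A hA
      simpa using hsmall A (by simpa using hA)
    | succ j ih =>
      intro hj A hA
      have hjm : j ≤ m - 1 := le_trans (Nat.le_succ j) hj
      -- A is not a cover, since its dimension is < m
      have hAlt : finrank F ↥A < m := by omega
      have hex : ∃ F0 ∈ ℱ, A ⊓ F0 = ⊥ := by
        by_contra h
        push_neg at h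
        have hmem : finrank F ↥A ∈
            { d : ℕ | ∃ W : Submodule F V, finrank F ↥W = d ∧
              ∀ G ∈ ℱ, 1 ≤ finrank F ↥(W ⊓ G) } := by
          refine ⟨A, rfl, fun G hG => ?_⟩
          have := h G hG
          have : finrank F ↥(A ⊓ G) ≠ 0 := fun h0 => this (Submodule.finrank_eq_zero.mp h0)
          omega
        have := Nat.sInf_le hmem
        rw [← coveringNumber, hτ] at this
        omega
      obtain ⟨F0, hF0mem, hF0⟩ := hex
      have hF0dim : finrank F ↥F0 = m := hdim F0 hF0mem
      set L : Set (Submodule F V) := {x : Submodule F V | x ≤ F0 ∧ finrank F ↥x = 1} with hLdef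
      have hLfin : L.Finite := Set.toFinite _
      -- cover by the lines of F0
      have hcover : {G | G ∈ ℱ ∧ A ≤ G} ⊆
          ⋃ x ∈ hLfin.toFinset, {G | G ∈ ℱ ∧ (A ⊔ x) ≤ G} := by
        rintro G ⟨hGm, hAG⟩
        have h1 : 1 ≤ finrank F ↥(F0 ⊓ G) := hint F0 hF0mem G hGm
        have hne' : F0 ⊓ G ≠ ⊥ := by
          intro hbot
          rw [hbot] at h1
          simp [finrank_bot] at h1
        obtain ⟨v, hv, hv0⟩ := Submodule.exists_mem_ne_zero_of_ne_bot hne'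
        have hvF0 : v ∈ F0 := hv.1
        have hvG : v ∈ G := hv.2
        refine Set.mem_iUnion.2 ⟨Submodule.span F {v}, Set.mem_iUnion.2 ⟨?_, hGm, ?_⟩⟩
        · rw [Set.Finite.mem_toFinset]
          exact ⟨by rw [Submodule.span_le, Set.singleton_subset_iff]; exact hvF0,
            finrank_span_singleton hv0⟩
        · exact sup_le hAG (by rw [Submodule.span_le, Set.singleton_subset_iff]; exact hvG)
      -- each piece has controlled size via ih
      have hpiece : ∀ x ∈ hLfin.toFinset,
          ({G | G ∈ ℱ ∧ (A ⊔ x) ≤ G}.ncard : ℚ) ≤ B1 * Bm ^ j := by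
        intro x hx
        rw [Set.Finite.mem_toFinset] at hx
        apply ih hjm
        have hxA : A ⊓ x = ⊥ := by
          rw [← le_bot_iff, ← hF0]
          exact inf_le_inf_left A hx.1
        have := Submodule.finrank_sup_add_finrank_inf_eq A x
        rw [hxA, hx.2, hA] at this
        simp only [finrank_bot] at this
        omega
      -- counting
      have hcount : (L.ncard : ℚ) = Bm := by
        have h := lines_count hq F0
        rw [hF0dim] at h
        have hqm : 1 ≤ q ^ m := Nat.one_le_pow _ _ (by omega)
        have : ((L.ncard * (q - 1) : ℕ) : ℚ) = ((q ^ m - 1 : ℕ) : ℚ) :=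
          congrArg (fun k : ℕ => (k : ℚ)) h
        rw [Nat.cast_mul, Nat.cast_sub (by omega), Nat.cast_sub hqm] at this
        push_cast at this
        rw [hBmval]
        field_simp
        linarith [this]
      calc ({G | G ∈ ℱ ∧ A ≤ G}.ncard : ℚ)
          ≤ ((⋃ x ∈ hLfin.toFinset, {G | G ∈ ℱ ∧ (A ⊔ x) ≤ G}).ncard : ℚ) := by
            exact_mod_cast Set.ncard_le_ncard hcover (Set.toFinite _)
        _ ≤ (∑ x ∈ hLfin.toFinset, {G | G ∈ ℱ ∧ (A ⊔ x) ≤ G}.ncard : ℕ) := by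
            exact_mod_cast aux_ncard_biUnion_le _ _
        _ ≤ ∑ x ∈ hLfin.toFinset, (B1 * Bm ^ j) := by
            push_cast
            exact Finset.sum_le_sum hpiece
        _ = (L.ncard : ℚ) * (B1 * Bm ^ j) := by
            rw [Finset.sum_const, nsmul_eq_mul, Set.ncard_eq_toFinset_card L hLfin]
        _ = B1 * Bm ^ (j + 1) := by rw [hcount]; ring
  have hbot : finrank F ↥(⊥ : Submodule F V) = m - 1 - (m - 1) := by
    rw [finrank_bot]; omega
  have := key (m - 1) le_rfl ⊥ hbot
  simpa using this
end

section
/- Let V be an n-dimensional vector space over 𝔽_q with m ≥ 2, and let ℱ be an intersecting family of m-dimensional subspaces of V with covering number τ(ℱ) = m. Suppose T is an (m−1)-dimensional subspace of V with |ℱ_T| > [m−1 over 1]_q, and set Y = Σ_{F ∈ ℱ_T} F. Then dim(Y) = 2m − 1, and every A ∈ ℱ with A ∩ T = 0 satisfies A ⊆ Y (indeed Y = T + A for every such A). -/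
open Module

lemma natCard_submodule {F V : Type*} [Field F] [Fintype F] [AddCommGroup V] [Module F V]
    [FiniteDimensional F V] (W : Submodule F V) :
    Nat.card ↥W = Fintype.card F ^ finrank F ↥W := by
  have : Finite V := Module.finite_of_finite F
  have : Fintype ↥W := Fintype.ofFinite _
  rw [Nat.card_eq_fintype_card, Module.card_fintype (Module.finBasis F ↥W), Fintype.card_fin]

lemma ncard_submodule_coe {F V : Type*} [Field F] [Fintype F] [AddCommGroup V] [Module F V]
    [FiniteDimensional F V] (W : Submodule F V) :
    ((W : Set V)).ncard = Fintype.card F ^ finrank F ↥W := by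
  rw [← Nat.card_coe_set_eq]
  exact natCard_submodule W

theorem stmt8 {F V : Type*} [Field F] [Fintype F] [AddCommGroup V] [Module F V]
    [FiniteDimensional F V] {q m n : ℕ} (hq : Fintype.card F = q)
    (hm : 2 ≤ m) (hV : finrank F V = n)
    (ℱ : Set (Submodule F V)) (hdim : ∀ A ∈ ℱ, finrank F ↥A = m)
    (hint : IsIntersectingFamily ℱ) (hτ : coveringNumber ℱ = m)
    (T : Submodule F V) (hT : finrank F ↥T = m - 1)
    (hbig : gaussBinom q (m - 1) 1 < ({G | G ∈ ℱ ∧ T ≤ G}.ncard : ℚ)) :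
    finrank F ↥(sSup {G | G ∈ ℱ ∧ T ≤ G}) = 2 * m - 1 ∧
      ∀ A ∈ ℱ, finrank F ↥(A ⊓ T) = 0 →
        A ≤ sSup {G | G ∈ ℱ ∧ T ≤ G} ∧
          sSup {G | G ∈ ℱ ∧ T ≤ G} = T ⊔ A := by
  classical
  haveI : Finite V := Module.finite_of_finite F
  haveI : Finite (Submodule F V) := Finite.of_injective _ SetLike.coe_injective
  have hq2 : 2 ≤ q := hq ▸ Fintype.one_lt_card
  set 𝒢 : Set (Submodule F V) := {G | G ∈ ℱ ∧ T ≤ G} with h𝒢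
  have hgauss : gaussBinom q (m - 1) 1 = ((q : ℚ) ^ (m - 1) - 1) / ((q : ℚ) - 1) := by
    simp [gaussBinom]
  have hq1Q : (1 : ℚ) < (q : ℚ) := by exact_mod_cast hq2
  have hgauss_nonneg : 0 ≤ gaussBinom q (m - 1) 1 := by
    rw [hgauss]
    apply div_nonneg
    · have : (1:ℚ) ≤ (q:ℚ) ^ (m-1) := one_le_pow₀ (le_of_lt hq1Q)
      linarith
    · linarith
  -- 𝒢 is nonempty
  have hne : 𝒢.Nonempty := by
    rw [Set.nonempty_iff_ne_empty]
    intro h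
    rw [h] at hbig
    simp at hbig
    exact absurd hbig (not_lt.mpr hgauss_nonneg)
  -- key structural lemma
  have key : ∀ A ∈ ℱ, finrank F ↥(A ⊓ T) = 0 →
      ∀ G ∈ 𝒢, finrank F ↥(G ⊓ A) = 1 ∧ G = T ⊔ (G ⊓ A) := by
    intro A hA hA0 G hG
    have hAT : A ⊓ T = ⊥ := Submodule.finrank_eq_zero.mp hA0
    have hGF : G ∈ ℱ := hG.1
    have hTG : T ≤ G := hG.2
    have hGA1 : 1 ≤ finrank F ↥(G ⊓ A) := hint G hGF A hA
    have hle' : T ⊓ (G ⊓ A) ≤ A ⊓ T :=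
      le_inf (le_trans inf_le_right inf_le_right) inf_le_left
    have hTinf : T ⊓ (G ⊓ A) = ⊥ := le_bot_iff.mp (hAT ▸ hle')
    have hsub : T ⊔ (G ⊓ A) ≤ G := sup_le hTG inf_le_left
    have hsum := Submodule.finrank_sup_add_finrank_inf_eq T (G ⊓ A)
    rw [hTinf, finrank_bot, hT] at hsum
    have hle : finrank F ↥(T ⊔ (G ⊓ A)) ≤ m := by
      rw [← hdim G hGF]
      exact Submodule.finrank_mono hsub
    have h1 : finrank F ↥(G ⊓ A) = 1 := by omega
    have hGeq : T ⊔ (G ⊓ A) = G :=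
      Submodule.eq_of_le_of_finrank_le hsub (by rw [hdim G hGF]; omega)
    exact ⟨h1, hGeq.symm⟩
  -- main lemma for each A missing T
  have main : ∀ A ∈ ℱ, finrank F ↥(A ⊓ T) = 0 → A ≤ sSup 𝒢 ∧ sSup 𝒢 = T ⊔ A := by
    intro A hA hA0
    obtain ⟨G₀, hG₀⟩ := hne
    have hTY : T ≤ sSup 𝒢 := le_trans hG₀.2 (le_sSup hG₀)
    set Y := sSup 𝒢 with hYdef
    set W := Y ⊓ A with hWdef
    have hGAW : ∀ G ∈ 𝒢, G ⊓ A ≤ W := fun G hG => inf_le_inf_right A (le_sSup hG)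
    -- counting: finrank W ≥ m
    have hfinW : m ≤ finrank F ↥W := by
      by_contra hc
      push_neg at hc
      let f : Submodule F V → Finset V :=
        fun G => (Set.toFinite (((G ⊓ A : Submodule F V) : Set V) \ {0})).toFinset
      let Gfin : Finset (Submodule F V) := (Set.toFinite 𝒢).toFinset
      have hGfin : ∀ {G}, G ∈ Gfin ↔ G ∈ 𝒢 := fun {G} => Set.Finite.mem_toFinset _
      have hmemf : ∀ {G v}, v ∈ f G ↔ v ∈ G ⊓ A ∧ v ≠ 0 := by
        intro G v; simp [f]
      have hcard_f : ∀ G ∈ 𝒢, (f G).card = q - 1 := by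
        intro G hG
        have h1 := (key A hA hA0 G hG).1
        have h2 : (((G ⊓ A : Submodule F V) : Set V) \ {0}).ncard = q - 1 := by
          rw [Set.ncard_diff_singleton_of_mem ((G ⊓ A).zero_mem), ncard_submodule_coe,
            h1, pow_one, hq]
        rw [← h2, Set.ncard_eq_toFinset_card]
      have hdisj : ∀ G ∈ Gfin, ∀ G' ∈ Gfin, G ≠ G' → Disjoint (f G) (f G') := by
        intro G hG G' hG' hne'
        rw [hGfin] at hG hG'
        rw [Finset.disjoint_left]
        intro v hv hv'
        rw [hmemf] at hv hv'
        apply hne'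
        have hs : Submodule.span F {v} ≤ G ⊓ A :=
          (Submodule.span_singleton_le_iff_mem v _).mpr hv.1
        have hs' : Submodule.span F {v} ≤ G' ⊓ A :=
          (Submodule.span_singleton_le_iff_mem v _).mpr hv'.1
        have e1 : Submodule.span F {v} = G ⊓ A :=
          Submodule.eq_of_le_of_finrank_le hs
            (by rw [(key A hA hA0 G hG).1, finrank_span_singleton hv.2])
        have e2 : Submodule.span F {v} = G' ⊓ A :=
          Submodule.eq_of_le_of_finrank_le hs'
            (by rw [(key A hA hA0 G' hG').1, finrank_span_singleton hv'.2])
        rw [(key A hA hA0 G hG).2, (key A hA hA0 G' hG').2, ← e1, ← e2]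
      have hsubW : Gfin.biUnion f ⊆ (Set.toFinite (((W : Set V)) \ {0})).toFinset := by
        intro v hv
        rw [Finset.mem_biUnion] at hv
        obtain ⟨G, hG, hvf⟩ := hv
        rw [hmemf] at hvf
        rw [Set.Finite.mem_toFinset]
        exact ⟨hGAW G (hGfin.mp hG) hvf.1, hvf.2⟩
      have hbu : (Gfin.biUnion f).card = Gfin.card * (q - 1) := by
        rw [Finset.card_biUnion hdisj,
          Finset.sum_congr rfl (fun G hG => hcard_f G (hGfin.mp hG))]
        simp [mul_comm]
      have hWcard : (((W : Set V)) \ {0}).ncard = q ^ finrank F ↥W - 1 := by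
        rw [Set.ncard_diff_singleton_of_mem (W.zero_mem), ncard_submodule_coe, hq]
      have hcount : 𝒢.ncard * (q - 1) ≤ q ^ (m - 1) - 1 := by
        have h2 : (Gfin.biUnion f).card ≤ (((W : Set V)) \ {0}).ncard := by
          rw [Set.ncard_eq_toFinset_card _ (Set.toFinite _)]
          exact Finset.card_le_card hsubW
        have h4 : q ^ finrank F ↥W ≤ q ^ (m - 1) :=
          Nat.pow_le_pow_right (by omega) (by omega)
        have hGcard : Gfin.card = 𝒢.ncard := (Set.ncard_eq_toFinset_card _ _).symm
        rw [hbu, hGcard, hWcard] at h2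
        omega
      -- contradiction with hbig
      have hp1 : 1 ≤ q ^ (m - 1) := Nat.one_le_pow _ _ (by omega)
      have hcQ : ((𝒢.ncard : ℚ)) * ((q : ℚ) - 1) ≤ (q : ℚ) ^ (m - 1) - 1 := by
        have := (Nat.cast_le (α := ℚ)).mpr hcount
        push_cast [Nat.cast_sub (by omega : 1 ≤ q), Nat.cast_sub hp1] at this
        convert this using 2 <;> push_cast <;> ring
      rw [hgauss, div_lt_iff₀ (by linarith)] at hbig
      linarith
    have hWA : W = A :=
      Submodule.eq_of_le_of_finrank_le inf_le_right (by rw [hdim A hA]; exact hfinW)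
    have hAY : A ≤ Y := le_trans (le_of_eq hWA.symm) inf_le_left
    refine ⟨hAY, le_antisymm ?_ (sup_le hTY hAY)⟩
    apply sSup_le
    intro G hG
    rw [(key A hA hA0 G hG).2]
    exact sup_le le_sup_left (le_trans inf_le_right le_sup_right)
  -- existence of A₀ with A₀ ⊓ T = 0
  have hex : ∃ A ∈ ℱ, finrank F ↥(A ⊓ T) = 0 := by
    by_contra hcon
    push_neg at hcon
    have hmem : (m - 1) ∈
        {d : ℕ | ∃ W : Submodule F V, finrank F ↥W = d ∧ ∀ A ∈ ℱ, 1 ≤ finrank F ↥(W ⊓ A)} := by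
      refine ⟨T, hT, fun A hA => ?_⟩
      have h := hcon A hA
      rw [inf_comm]
      omega
    have := Nat.sInf_le hmem
    rw [coveringNumber] at hτ
    omega
  obtain ⟨A₀, hA₀F, hA₀0⟩ := hex
  obtain ⟨hA₀Y, hYeq⟩ := main A₀ hA₀F hA₀0
  refine ⟨?_, fun A hA h0 => main A hA h0⟩
  rw [hYeq]
  have hbot : T ⊓ A₀ = ⊥ := by rw [inf_comm]; exact Submodule.finrank_eq_zero.mp hA₀0
  have hsum := Submodule.finrank_sup_add_finrank_inf_eq T A₀
  rw [hbot, finrank_bot, hT, hdim A₀ hA₀F] at hsum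
  omega
end

section
/- For all integers q and m with q ≥ m ≥ 3, the inequality [m−1 over 1]_q · [m over 1]_q^{m−1} + [m−1 over 1]_q² · [2m−3 over m−2]_q < [2m−1 over m]_q holds. -/
private lemma gauss_one' (q n : ℕ) : gaussBinom q n 1 = ((q:ℚ)^n - 1)/((q:ℚ) - 1) := by
  simp [gaussBinom]

private lemma bern'' {Q : ℚ} (hQ1 : 1 ≤ Q) : ∀ n : ℕ, Q^n * (Q - n) ≤ (Q-1)^n * Q := by
  intro n
  induction n with
  | zero => simp
  | succ n ih =>
    have hQn : (0:ℚ) ≤ Q^n := pow_nonneg (by linarith) n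
    have h1 : (0:ℚ) ≤ Q - 1 := by linarith
    have hn : (0:ℚ) ≤ (n:ℚ) := Nat.cast_nonneg n
    rw [pow_succ, pow_succ]
    push_cast
    nlinarith [mul_le_mul_of_nonneg_left ih h1, mul_nonneg hn hQn]

private lemma keyK' {Q : ℚ} {m : ℕ} (hQ3 : 3 ≤ Q) (hm : 3 ≤ m) (hQm : (m:ℚ) ≤ Q) :
    4 * Q^(m-2) ≤ 3 * (Q-1)^(m-1) := by
  have hb := bern'' (by linarith : (1:ℚ) ≤ Q) (m-2)
  have hc : ((m-2:ℕ):ℚ) = (m:ℚ) - 2 := by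
    push_cast [Nat.cast_sub (by omega : 2 ≤ m)]; ring
  rw [hc] at hb
  rw [show m-1 = (m-2)+1 from by omega, pow_succ]
  have ht : (0:ℚ) < Q^(m-2) := pow_pos (by linarith) _
  have h2 : Q^(m-2) * (m:ℚ) ≤ Q^(m-2) * Q := mul_le_mul_of_nonneg_left hQm ht.le
  have hWQ : 2 * Q^(m-2) ≤ (Q-1)^(m-2) * Q := by nlinarith [hb, h2]
  nlinarith [hWQ, ht,
    mul_nonneg (mul_nonneg ht.le (by linarith : (0:ℚ) ≤ Q-3)) (by linarith : (0:ℚ) ≤ Q-1),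
    mul_le_mul_of_nonneg_right hWQ (by linarith : (0:ℚ) ≤ Q-1)]

set_option maxHeartbeats 2000000 in
theorem stmt9 {q m : ℕ} (hqm : m ≤ q) (hm : 3 ≤ m) :
    gaussBinom q (m - 1) 1 * gaussBinom q m 1 ^ (m - 1) +
        gaussBinom q (m - 1) 1 ^ 2 * gaussBinom q (2 * m - 3) (m - 2) <
      gaussBinom q (2 * m - 1) m := by
  have hq3 : 3 ≤ q := hm.trans hqm
  have hQ3 : (3:ℚ) ≤ (q:ℚ) := by exact_mod_cast hq3
  have hQ1 : (1:ℚ) < (q:ℚ) := by linarith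
  have hQm : ((m:ℚ)) ≤ (q:ℚ) := by exact_mod_cast hqm
  have hpow : ∀ k : ℕ, 1 ≤ k → 0 < (q:ℚ) ^ k - 1 := by
    intro k hk
    have := one_lt_pow₀ hQ1 (by omega : k ≠ 0)
    linarith
  have hx9 : (9:ℚ) ≤ (q:ℚ)^(m-1) := by
    calc (9:ℚ) = 3^2 := by norm_num
    _ ≤ (q:ℚ)^2 := by nlinarith
    _ ≤ (q:ℚ)^(m-1) := pow_le_pow_right₀ (by linarith) (by omega)
  have eA : (q:ℚ)^(2*m-2) = (q:ℚ)^(m-1) * (q:ℚ)^(m-1) := by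
    rw [← pow_add]; congr 1; omega
  have eB : (q:ℚ)^(2*m-1) = (q:ℚ)^(m-1) * (q:ℚ)^(m-1) * (q:ℚ) := by
    rw [show 2*m-1 = (m-1)+(m-1)+1 from by omega, pow_add, pow_add, pow_one]
  have eC : (q:ℚ)^m = (q:ℚ)^(m-1) * (q:ℚ) := by
    conv_lhs => rw [show m = (m-1)+1 from by omega]
    rw [pow_succ]
  have hGB3pos : 0 < gaussBinom q (2*m-3) (m-2) := by
    rw [gaussBinom]
    apply Finset.prod_pos
    intro i hi
    simp only [Finset.mem_range] at hi
    exact div_pos (hpow _ (by omega)) (hpow _ (by omega))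
  have hsplit : gaussBinom q (2*m-1) m
      = gaussBinom q (2*m-3) (m-2) * (((q:ℚ)^(2*m-2)-1)/((q:ℚ)^(m-1)-1))
          * (((q:ℚ)^(2*m-1)-1)/((q:ℚ)^m-1)) := by
    rw [gaussBinom, show Finset.range m = Finset.range ((m-2)+1+1) from by congr 1; omega,
        Finset.prod_range_succ', Finset.prod_range_succ']
    congr 1
    congr 1
    · rw [gaussBinom]
      apply Finset.prod_congr rfl
      intro i hi
      simp only [Finset.mem_range] at hi
      rw [show 2*m-1-(i+1+1) = 2*m-3-i from by omega,
          show m-(i+1+1) = m-2-i from by omega]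
  -- Term 2 bound
  have hTerm2 : gaussBinom q (m-1) 1 ^ 2 * gaussBinom q (2*m-3) (m-2)
      ≤ (1/4) * gaussBinom q (2*m-1) m := by
    rw [hsplit, gauss_one', eA, eB, eC]
    generalize hxg : ((q:ℚ))^(m-1) = x at hx9 ⊢
    have hQ1' : (0:ℚ) < (q:ℚ) - 1 := by linarith
    have hx1 : (0:ℚ) < x - 1 := by linarith
    have hxQ1 : (0:ℚ) < x * (q:ℚ) - 1 := by nlinarith
    have hxx1 : (0:ℚ) < x*x - 1 := by nlinarith
    have hxxQ1 : (0:ℚ) < x*x*(q:ℚ) - 1 := by nlinarith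
    have key : ((x - 1)/((q:ℚ)-1))^2
        ≤ 1/4 * ((x*x-1)/(x-1) * ((x*x*(q:ℚ)-1)/(x*(q:ℚ)-1))) := by
      have e : 1/4 * ((x*x-1)/(x-1) * ((x*x*(q:ℚ)-1)/(x*(q:ℚ)-1)))
          = ((x*x-1)*(x*x*(q:ℚ)-1)) / (4*((x-1)*(x*(q:ℚ)-1))) := by
        field_simp
      rw [div_pow, e, div_le_div_iff₀ (pow_pos hQ1' 2) (by positivity)]
      have h1 : (x-1)^2 ≤ x*x - 1 := by nlinarith
      have h2 : (x-1)*(x*(q:ℚ)-1) ≤ x*x*(q:ℚ)-1 := by nlinarith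
      have h3 : (4:ℚ) ≤ ((q:ℚ)-1)^2 := by nlinarith
      have hA : (x-1)^2 * ((x-1)*(x*(q:ℚ)-1)) ≤ (x*x-1)*(x*x*(q:ℚ)-1) :=
        mul_le_mul h1 h2 (by positivity) (by positivity)
      calc (x-1)^2 * (4*((x-1)*(x*(q:ℚ)-1)))
          = 4*((x-1)^2*((x-1)*(x*(q:ℚ)-1))) := by ring
        _ ≤ 4*((x*x-1)*(x*x*(q:ℚ)-1)) := by linarith
        _ ≤ ((x*x-1)*(x*x*(q:ℚ)-1)) * ((q:ℚ)-1)^2 := by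
            nlinarith [mul_le_mul_of_nonneg_right h3 (mul_pos hxx1 hxxQ1).le]
    calc ((x - 1)/((q:ℚ)-1))^2 * gaussBinom q (2*m-3) (m-2)
        ≤ (1/4 * ((x*x-1)/(x-1) * ((x*x*(q:ℚ)-1)/(x*(q:ℚ)-1)))) * gaussBinom q (2*m-3) (m-2) :=
          mul_le_mul_of_nonneg_right key hGB3pos.le
      _ = 1/4 * (gaussBinom q (2*m-3) (m-2) * ((x*x-1)/(x-1)) * ((x*x*(q:ℚ)-1)/(x*(q:ℚ)-1))) := by
          ring
  -- Term 1 bound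
  have hQ0 : (0:ℚ) < (q:ℚ) := by linarith
  have hQ1' : (0:ℚ) < (q:ℚ) - 1 := by linarith
  have hBpos : (0:ℚ) < (q:ℚ)^m - 1 := hpow m (by omega)
  have hTerm1 : gaussBinom q (m-1) 1 * gaussBinom q m 1 ^ (m-1)
      < (3/4) * gaussBinom q (2*m-1) m := by
    rw [gauss_one', gauss_one', gaussBinom,
        show Finset.range m = Finset.range ((m-1)+1) from by congr 1; omega,
        Finset.prod_range_succ,
        show 2*m-1-(m-1) = m from by omega, show m-(m-1) = 1 from by omega, pow_one]
    have hpoint : ∀ i ∈ Finset.range (m-1),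
        ((q:ℚ)^m-1)/(q:ℚ) ≤ ((q:ℚ)^(2*m-1-i)-1)/((q:ℚ)^(m-i)-1) := by
      intro i hi
      simp only [Finset.mem_range] at hi
      have eF : (q:ℚ)^(2*m-1-i) = (q:ℚ)^(m-1) * (q:ℚ)^(m-i) := by
        rw [← pow_add]; congr 1; omega
      rw [div_le_div_iff₀ hQ0 (hpow _ (by omega)), eF, eC]
      have hy : (3:ℚ) ≤ (q:ℚ)^(m-i) := le_trans hQ3 (le_self_pow₀ (by linarith) (by omega))
      nlinarith [hx9, hy, hQ3]
    have hprodpos : 0 < ∏ i ∈ Finset.range (m-1), (((q:ℚ)^(2*m-1-i)-1)/((q:ℚ)^(m-i)-1)) := by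
      apply Finset.prod_pos
      intro i hi
      simp only [Finset.mem_range] at hi
      exact div_pos (hpow _ (by omega)) (hpow _ (by omega))
    have hP : (((q:ℚ)^m-1)/(q:ℚ))^(m-1)
        ≤ ∏ i ∈ Finset.range (m-1), (((q:ℚ)^(2*m-1-i)-1)/((q:ℚ)^(m-i)-1)) := by
      have hc : (((q:ℚ)^m-1)/(q:ℚ))^(m-1)
          = ∏ _i ∈ Finset.range (m-1), (((q:ℚ)^m-1)/(q:ℚ)) := by
        rw [Finset.prod_const, Finset.card_range]
      rw [hc]
      exact Finset.prod_le_prod (fun i _ => by positivity) hpoint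
    have hGm_pos : (0:ℚ) < ((q:ℚ)^m-1)/((q:ℚ)-1) := div_pos hBpos hQ1'
    have core2 : 4*(((q:ℚ)^(m-1)-1)*(q:ℚ)^(m-1)) < 3*(((q:ℚ)^m-1)*((q:ℚ)-1)^(m-1)) := by
      have eD : (q:ℚ)^(m-1) = (q:ℚ)^(m-2)*(q:ℚ) := by
        conv_lhs => rw [show m-1 = (m-2)+1 from by omega]
        rw [pow_succ]
      have eE : (q:ℚ)^m = (q:ℚ)^(m-2)*(q:ℚ)*(q:ℚ) := by
        conv_lhs => rw [show m = (m-2)+1+1 from by omega]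
        rw [pow_succ, pow_succ]
      have hK := keyK' hQ3 hm hQm
      have ht : (3:ℚ) ≤ (q:ℚ)^(m-2) := le_trans hQ3 (le_self_pow₀ (by linarith) (by omega))
      rw [eD, eE]
      have hpos : (0:ℚ) < (q:ℚ)^(m-2)*(q:ℚ)*(q:ℚ) - 1 := by nlinarith
      have h5 : ((q:ℚ)^(m-2)*(q:ℚ)-1)*((q:ℚ)^(m-2)*(q:ℚ))
          < (q:ℚ)^(m-2)*((q:ℚ)^(m-2)*(q:ℚ)*(q:ℚ)-1) := by nlinarith
      have h6 := mul_le_mul_of_nonneg_right hK hpos.le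
      nlinarith [h5, h6]
    have core : ((q:ℚ)^(m-1)-1)/((q:ℚ)-1) * (((q:ℚ)^m-1)/((q:ℚ)-1))^(m-1)
        < 3/4 * ((((q:ℚ)^m-1)/(q:ℚ))^(m-1) * (((q:ℚ)^m-1)/((q:ℚ)-1))) := by
      have e1 : ((q:ℚ)^(m-1)-1)/((q:ℚ)-1) * (((q:ℚ)^m-1)/((q:ℚ)-1))^(m-1)
          = (((q:ℚ)^(m-1)-1) * ((q:ℚ)^m-1)^(m-1))/(((q:ℚ)-1)*((q:ℚ)-1)^(m-1)) := by
        rw [div_pow, div_mul_div_comm]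
      have e2 : 3/4 * ((((q:ℚ)^m-1)/(q:ℚ))^(m-1) * (((q:ℚ)^m-1)/((q:ℚ)-1)))
          = (3*(((q:ℚ)^m-1)^(m-1)*((q:ℚ)^m-1)))/(4*((q:ℚ)^(m-1)*((q:ℚ)-1))) := by
        rw [div_pow, div_mul_div_comm, div_mul_div_comm]
      rw [e1, e2, div_lt_div_iff₀ (by positivity) (by positivity)]
      nlinarith [mul_lt_mul_of_pos_right core2 (mul_pos (pow_pos hBpos (m-1)) hQ1')]
    calc ((q:ℚ)^(m-1)-1)/((q:ℚ)-1) * (((q:ℚ)^m-1)/((q:ℚ)-1))^(m-1)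
        < 3/4 * ((((q:ℚ)^m-1)/(q:ℚ))^(m-1) * (((q:ℚ)^m-1)/((q:ℚ)-1))) := core
      _ ≤ 3/4 * ((∏ i ∈ Finset.range (m-1), (((q:ℚ)^(2*m-1-i)-1)/((q:ℚ)^(m-i)-1)))
            * (((q:ℚ)^m-1)/((q:ℚ)-1))) := by
          have := mul_le_mul_of_nonneg_right hP hGm_pos.le
          linarith
  linarith [hTerm1, hTerm2]
end

section
/- For all integers q ≥ 2 and m ≥ 2, the inequality [2m−1 over m]_q > q^{2(m−1)} · [2m−3 over m−2]_q holds. -/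
theorem stmt11 {q m : ℕ} (hq : 2 ≤ q) (hm : 2 ≤ m) :
    (q : ℚ) ^ (2 * (m - 1)) * gaussBinom q (2 * m - 3) (m - 2) <
      gaussBinom q (2 * m - 1) m := by
  obtain ⟨k, rfl⟩ : ∃ k, m = k + 2 := ⟨m - 2, by omega⟩
  have hQ1 : (1:ℚ) < (q:ℚ) := by exact_mod_cast by omega
  set Q : ℚ := (q:ℚ) with hQdef
  have hQ0 : 0 < Q := by linarith
  have h1 : 2 * (k+2) - 1 = 2*k+3 := by omega
  have h2 : 2 * (k+2) - 3 = 2*k+1 := by omega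
  have h3 : (k+2) - 2 = k := by omega
  have h4 : 2 * ((k+2) - 1) = 2*k+2 := by omega
  rw [h1, h2, h3, h4]
  have hpow : ∀ n : ℕ, n ≠ 0 → (1:ℚ) < Q ^ n := fun n hn => one_lt_pow₀ hQ1 hn
  have hBpos : 0 < gaussBinom q (2*k+1) k := by
    apply Finset.prod_pos
    intro i hi
    simp only [Finset.mem_range] at hi
    apply div_pos
    · have : (1:ℚ) < Q ^ (2*k+1-i) := hpow _ (by omega)
      linarith
    · have : (1:ℚ) < Q ^ (k-i) := hpow _ (by omega)
      linarith
  have hexp : gaussBinom q (2*k+3) (k+2) =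
      gaussBinom q (2*k+1) k * ((Q^(2*k+2) - 1)/(Q^(k+1)-1)) * ((Q^(2*k+3)-1)/(Q^(k+2)-1)) := by
    unfold gaussBinom
    rw [Finset.prod_range_succ', Finset.prod_range_succ']
    show _ = (∏ i ∈ Finset.range k, ((q:ℚ) ^ (2*k+1 - i) - 1) / ((q:ℚ) ^ (k - i) - 1)) * (((q:ℚ)^(2*k+2) - 1)/((q:ℚ)^(k+1)-1)) * (((q:ℚ)^(2*k+3)-1)/((q:ℚ)^(k+2)-1))
    rw [show 2*k+3-(0+1) = 2*k+2 by omega, show k+2-(0+1) = k+1 by omega,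
      show 2*k+3-0 = 2*k+3 by omega, show k+2-0 = k+2 by omega]
    congr 1
    congr 1
    apply Finset.prod_congr rfl
    intro i _
    rw [show 2*k+3-(i+1+1) = 2*k+1-i by omega, show k+2-(i+1+1) = k-i by omega]
  rw [hexp]
  have hd1 : (0:ℚ) < Q^(k+1) - 1 := by have := hpow (k+1) (by omega); linarith
  have hd2 : (0:ℚ) < Q^(k+2) - 1 := by have := hpow (k+2) (by omega); linarith
  have e1 : Q^(2*k+2) = Q^(k+1) * Q^(k+1) := by rw [← pow_add]; congr 1; omega
  have e2 : Q^(2*k+3) = Q^(k+1) * Q^(k+2) := by rw [← pow_add]; congr 1; omega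
  have hr1 : Q^(k+1) < (Q^(2*k+2) - 1)/(Q^(k+1)-1) := by
    rw [lt_div_iff₀ hd1]
    have h := hpow (k+1) (by omega)
    nlinarith [e1]
  have hr2 : Q^(k+1) < (Q^(2*k+3) - 1)/(Q^(k+2)-1) := by
    rw [lt_div_iff₀ hd2]
    have h := hpow (k+1) (by omega)
    nlinarith [e2]
  have hp : 0 < Q^(k+1) := pow_pos hQ0 _
  calc Q^(2*k+2) * gaussBinom q (2*k+1) k
      = gaussBinom q (2*k+1) k * (Q^(k+1) * Q^(k+1)) := by rw [e1]; ring
    _ < gaussBinom q (2*k+1) k * (((Q^(2*k+2) - 1)/(Q^(k+1)-1)) * ((Q^(2*k+3)-1)/(Q^(k+2)-1))) := by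
        apply mul_lt_mul_of_pos_left _ hBpos
        exact mul_lt_mul' hr1.le hr2 hp.le (lt_trans hp hr1)
    _ = _ := by ring
end

section
/- For all integers q and m with q ≥ m ≥ 4, the inequalities q^{m−1}/(q−1)^{m−2} < q²/(q−m+2) ≤ q(q−2) hold. -/
lemma aux12 (k : ℕ) : ∀ x : ℚ, (k : ℚ) + 4 ≤ x →
    x ^ (k + 1) * (x - ((k : ℚ) + 2)) < (x - 1) ^ (k + 2) := by
  induction k with
  | zero =>
    intro x hx
    push_cast at hx ⊢
    nlinarith [sq_nonneg (x - 1)]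
  | succ k ih =>
    intro x hx
    push_cast at hx ⊢
    have hx' : (k : ℚ) + 4 ≤ x := by linarith
    have h1 := ih x hx'
    have hxpos : (0 : ℚ) < x := by linarith
    have hx1 : (0 : ℚ) < x - 1 := by linarith
    have hp : (0 : ℚ) < x ^ (k + 1) := pow_pos hxpos _
    have key : x * (x - ((k : ℚ) + 1 + 2)) ≤ (x - 1) * (x - ((k : ℚ) + 2)) := by
      nlinarith
    calc x ^ (k + 1 + 1) * (x - ((k : ℚ) + 1 + 2))
        = x ^ (k + 1) * (x * (x - ((k : ℚ) + 1 + 2))) := by ring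
      _ ≤ x ^ (k + 1) * ((x - 1) * (x - ((k : ℚ) + 2))) := by
          exact mul_le_mul_of_nonneg_left key hp.le
      _ = (x - 1) * (x ^ (k + 1) * (x - ((k : ℚ) + 2))) := by ring
      _ < (x - 1) * (x - 1) ^ (k + 2) := by
          exact mul_lt_mul_of_pos_left h1 hx1
      _ = (x - 1) ^ (k + 1 + 2) := by ring

theorem stmt12 {q m : ℕ} (hqm : m ≤ q) (hm : 4 ≤ m) :
    (q : ℚ) ^ (m - 1) / ((q : ℚ) - 1) ^ (m - 2) < (q : ℚ) ^ 2 / ((q : ℚ) - (m : ℚ) + 2) ∧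
      (q : ℚ) ^ 2 / ((q : ℚ) - (m : ℚ) + 2) ≤ (q : ℚ) * ((q : ℚ) - 2) := by
  obtain ⟨k, rfl⟩ : ∃ k, m = k + 4 := ⟨m - 4, by omega⟩
  have hq4 : (4 : ℚ) + k ≤ (q : ℚ) := by exact_mod_cast by omega
  have hqQ : (0 : ℚ) < q := by linarith [Nat.cast_nonneg (α := ℚ) k]
  have hknn : (0 : ℚ) ≤ k := Nat.cast_nonneg k
  have hden : (0 : ℚ) < (q : ℚ) - ((k : ℚ) + 4) + 2 := by linarith
  have hq1 : (0 : ℚ) < (q : ℚ) - 1 := by linarith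
  have hqm1 : k + 4 - 1 = k + 3 := by omega
  have hqm2 : k + 4 - 2 = k + 2 := by omega
  rw [hqm1, hqm2]
  have hmcast : ((k + 4 : ℕ) : ℚ) = (k : ℚ) + 4 := by push_cast; ring
  rw [hmcast]
  constructor
  · rw [div_lt_div_iff₀ (pow_pos hq1 _) hden]
    have h := aux12 k q (by linarith)
    have hq2 : (0 : ℚ) < (q : ℚ) ^ 2 := by positivity
    calc (q : ℚ) ^ (k + 3) * ((q : ℚ) - ((k : ℚ) + 4) + 2)
        = (q : ℚ) ^ 2 * ((q : ℚ) ^ (k + 1) * ((q : ℚ) - ((k : ℚ) + 2))) := by ring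
      _ < (q : ℚ) ^ 2 * ((q : ℚ) - 1) ^ (k + 2) := mul_lt_mul_of_pos_left h hq2
  · rw [div_le_iff₀ hden]
    have hd2 : (2 : ℚ) ≤ (q : ℚ) - ((k : ℚ) + 4) + 2 := by linarith
    have h1 : (q : ℚ) ≤ ((q : ℚ) - 2) * ((q : ℚ) - ((k : ℚ) + 4) + 2) := by nlinarith
    nlinarith
end

section
/- Let V be a finite-dimensional vector space over 𝔽_q, and let A and B be subspaces of V with dim A = a, dim B = b, and dim(A ∩ B) = c. Suppose 0 ≤ d ≤ a − b. Then there exists a subspace S of A + B with dim S = b − c + d such that dim(S ∩ A) = d and S ∩ B = 0. -/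
open Module

private lemma aux_exists_submodule {K M : Type*} [Field K] [AddCommGroup M] [Module K M]
    [FiniteDimensional K M] {k : ℕ} (h : k ≤ finrank K M) :
    ∃ S : Submodule K M, finrank K ↥S = k := by
  obtain ⟨f, hf⟩ := exists_linearIndependent_of_le_finrank h
  exact ⟨Submodule.span K (Set.range f), by
    rw [finrank_span_eq_card hf, Fintype.card_fin]⟩

private lemma aux_compl_disjoint {K M : Type*} [Field K] [AddCommGroup M] [Module K M]
    (P Q : Submodule K M) (q : Submodule K ↥P)
    (hq : Disjoint ((P ⊓ Q).comap P.subtype) q) : (q.map P.subtype) ⊓ Q = ⊥ := by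
  rw [eq_bot_iff]
  rintro x ⟨⟨y, hy, rfl⟩, hxQ⟩
  have hy2 : y ∈ (P ⊓ Q).comap P.subtype := by
    simp only [Submodule.mem_comap, Submodule.mem_inf]
    exact ⟨y.2, hxQ⟩
  have : y = 0 := by
    have := hq.le_bot (Submodule.mem_inf.2 ⟨hy2, hy⟩)
    simpa using this
  simp [this]

theorem stmt15 {F V : Type*} [Field F] [Fintype F] [AddCommGroup V] [Module F V]
    [FiniteDimensional F V] {a b c d : ℕ}
    (A B : Submodule F V) (hA : finrank F ↥A = a) (hB : finrank F ↥B = b)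
    (hC : finrank F ↥(A ⊓ B) = c) (hd : (d : ℤ) ≤ (a : ℤ) - (b : ℤ)) :
    ∃ S : Submodule F V, S ≤ A ⊔ B ∧ finrank F ↥S = b - c + d ∧
      finrank F ↥(S ⊓ A) = d ∧ finrank F ↥(S ⊓ B) = 0 := by
  have hba : b + d ≤ a := by omega
  have hcb : c ≤ b := by
    rw [← hB, ← hC]; exact Submodule.finrank_mono inf_le_right
  have hca : c ≤ a := by
    rw [← hA, ← hC]; exact Submodule.finrank_mono inf_le_left
  -- complement of A ⊓ B inside A
  obtain ⟨qA, hqA⟩ := Submodule.exists_isCompl ((A ⊓ B).comap A.subtype)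
  set A' : Submodule F V := qA.map A.subtype with hA'def
  have hA'le : A' ≤ A := Submodule.map_subtype_le _ _
  have hA'B : A' ⊓ B = ⊥ := aux_compl_disjoint A B qA hqA.disjoint
  have hA'rank : finrank F ↥A' = a - c := by
    have h1 : finrank F ↥A' = finrank F ↥qA := Submodule.finrank_map_subtype_eq A qA
    have h2 := Submodule.finrank_add_eq_of_isCompl hqA
    have h3 : finrank F ↥((A ⊓ B).comap A.subtype) = c := by
      rw [← hC]
      exact (Submodule.comapSubtypeEquivOfLe (inf_le_left : A ⊓ B ≤ A)).finrank_eq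
    rw [hA] at h2; omega
  -- complement of A ⊓ B inside B
  obtain ⟨qB, hqB⟩ := Submodule.exists_isCompl ((B ⊓ A).comap B.subtype)
  set W : Submodule F V := qB.map B.subtype with hWdef
  have hWle : W ≤ B := Submodule.map_subtype_le _ _
  have hWA : W ⊓ A = ⊥ := aux_compl_disjoint B A qB hqB.disjoint
  have hWrank : finrank F ↥W = b - c := by
    have h1 : finrank F ↥W = finrank F ↥qB := Submodule.finrank_map_subtype_eq B qB
    have h2 := Submodule.finrank_add_eq_of_isCompl hqB
    have h3 : finrank F ↥((B ⊓ A).comap B.subtype) = c := by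
      have hba' : finrank F ↥(B ⊓ A) = c := by rw [inf_comm]; exact hC
      exact (Submodule.comapSubtypeEquivOfLe (inf_le_left : B ⊓ A ≤ B)).finrank_eq.trans hba'
    rw [hB] at h2; omega
  -- inside A' find U' of dim b - c and disjoint D' of dim d
  obtain ⟨U', hU'⟩ := aux_exists_submodule (K := F) (M := ↥A')
    (k := b - c) (by rw [hA'rank]; omega)
  obtain ⟨qU, hqU⟩ := Submodule.exists_isCompl U'
  obtain ⟨D'', hD''⟩ := aux_exists_submodule (K := F) (M := ↥qU) (k := d) (by
    have h2 := Submodule.finrank_add_eq_of_isCompl hqU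
    rw [hU', hA'rank] at h2; omega)
  set D' : Submodule F ↥A' := D''.map qU.subtype with hD'def
  have hD'rank : finrank F ↥D' = d := by
    rw [hD'def, Submodule.finrank_map_subtype_eq]; exact hD''
  have hD'le : D' ≤ qU := Submodule.map_subtype_le _ _
  have hU'D' : Disjoint U' D' := hqU.disjoint.mono_right hD'le
  set U : Submodule F V := U'.map A'.subtype with hUdef
  set D : Submodule F V := D'.map A'.subtype with hDdef
  have hUle : U ≤ A' := Submodule.map_subtype_le _ _
  have hDle : D ≤ A' := Submodule.map_subtype_le _ _
  have hUrank : finrank F ↥U = b - c := by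
    rw [hUdef, Submodule.finrank_map_subtype_eq]; exact hU'
  have hDrank : finrank F ↥D = d := by
    rw [hDdef, Submodule.finrank_map_subtype_eq]; exact hD'rank
  have hUD : U ⊓ D = ⊥ := by
    rw [hUdef, hDdef, ← Submodule.map_inf _ (Submodule.injective_subtype A'),
      hU'D'.eq_bot, Submodule.map_bot]
  -- the equivalence W ≃ U
  have hWU : finrank F ↥W = finrank F ↥U := by rw [hWrank, hUrank]
  let e : ↥W ≃ₗ[F] ↥U := LinearEquiv.ofFinrankEq _ _ hWU
  let g : ↥W →ₗ[F] V := U.subtype.comp e.toLinearMap + W.subtype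
  have hg : ∀ w : ↥W, g w = ↑(e w) + ↑w := fun w => rfl
  have hginj : Function.Injective g := by
    rw [← LinearMap.ker_eq_bot, eq_bot_iff]
    intro w hw
    rw [LinearMap.mem_ker] at hw
    have h1 : (w : V) ∈ W ⊓ A := by
      refine Submodule.mem_inf.2 ⟨w.2, ?_⟩
      have h0 : (↑(e w) : V) + ↑w = 0 := by rw [← hg w, hw]
      have : (w : V) = -(e w : V) := eq_neg_of_add_eq_zero_right h0
      rw [this]
      exact A.neg_mem (hA'le (hUle (e w).2))
    rw [hWA] at h1
    have : (w : V) = 0 := h1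
    simpa using Subtype.ext this
  set T : Submodule F V := LinearMap.range g with hTdef
  have hTrank : finrank F ↥T = b - c := by
    rw [hTdef, LinearMap.finrank_range_of_inj hginj, hWrank]
  have hTmem : ∀ x, x ∈ T ↔ ∃ w : ↥W, (↑(e w) : V) + ↑w = x := by
    intro x; rw [hTdef, LinearMap.mem_range]; rfl
  refine ⟨D ⊔ T, ?_, ?_, ?_, ?_⟩
  · -- D ⊔ T ≤ A ⊔ B
    refine sup_le (le_trans hDle (le_trans hA'le le_sup_left)) ?_
    rintro x hx
    obtain ⟨w, rfl⟩ := (hTmem x).1 hx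
    exact Submodule.add_mem _ (Submodule.mem_sup_left (hA'le (hUle (e w).2)))
      (Submodule.mem_sup_right (hWle w.2))
  · -- finrank (D ⊔ T) = b - c + d
    have hDT : D ⊓ T = ⊥ := by
      rw [eq_bot_iff]
      rintro x ⟨hxD, hxT⟩
      obtain ⟨w, rfl⟩ := (hTmem _).1 hxT
      have hwA : (w : V) ∈ W ⊓ A := by
        refine Submodule.mem_inf.2 ⟨w.2, ?_⟩
        have h1 : (w : V) = (↑(e w) + ↑w) - ↑(e w) := by abel
        rw [h1]
        exact A.sub_mem (hA'le (hDle hxD)) (hA'le (hUle (e w).2))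
      rw [hWA] at hwA
      have hw0 : (w : V) = 0 := hwA
      have : w = 0 := Subtype.ext hw0
      simp [this]
    have := Submodule.finrank_sup_add_finrank_inf_eq D T
    rw [hDT, finrank_bot, hDrank, hTrank] at this
    omega
  · -- finrank ((D ⊔ T) ⊓ A) = d
    have heq : (D ⊔ T) ⊓ A = D := by
      apply le_antisymm
      · rintro v ⟨hvS, hvA⟩
        obtain ⟨x, hxD, t, hxT, rfl⟩ := Submodule.mem_sup.1 hvS
        obtain ⟨w, rfl⟩ := (hTmem _).1 hxT
        have hwA : (w : V) ∈ W ⊓ A := by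
          refine Submodule.mem_inf.2 ⟨w.2, ?_⟩
          have h1 : (w : V) = (x + (↑(e w) + ↑w)) - x - ↑(e w) := by abel
          rw [h1]
          exact A.sub_mem (A.sub_mem hvA (hA'le (hDle hxD))) (hA'le (hUle (e w).2))
        rw [hWA] at hwA
        have hw0 : (w : V) = 0 := hwA
        have hw : w = 0 := Subtype.ext hw0
        simpa [hw] using hxD
      · exact le_inf le_sup_left (le_trans hDle hA'le)
    rw [heq, hDrank]
  · -- finrank ((D ⊔ T) ⊓ B) = 0
    have heq : (D ⊔ T) ⊓ B = ⊥ := by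
      rw [eq_bot_iff]
      rintro v ⟨hvS, hvB⟩
      obtain ⟨x, hxD, t, hxT, rfl⟩ := Submodule.mem_sup.1 hvS
      obtain ⟨w, rfl⟩ := (hTmem _).1 hxT
      have hkey : x + ↑(e w) ∈ A' ⊓ B := by
        refine Submodule.mem_inf.2 ⟨A'.add_mem (hDle hxD) (hUle (e w).2), ?_⟩
        have h1 : x + (↑(e w) : V) = (x + (↑(e w) + ↑w)) - ↑w := by abel
        rw [h1]
        exact B.sub_mem hvB (hWle w.2)
      rw [hA'B] at hkey
      have hkey0 : x + (↑(e w) : V) = 0 := hkey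
      have hxUD : x ∈ U ⊓ D := by
        refine Submodule.mem_inf.2 ⟨?_, hxD⟩
        have hx : x = -(↑(e w) : V) := eq_neg_of_add_eq_zero_left hkey0
        rw [hx]
        exact U.neg_mem (e w).2
      rw [hUD] at hxUD
      have hx0 : x = 0 := hxUD
      have hew : (↑(e w) : V) = 0 := by rw [hx0] at hkey0; simpa using hkey0
      have hew' : e w = 0 := Subtype.ext hew
      have hw0 : w = 0 := e.injective (by simp [hew'])
      have : x + ((↑(e w) : V) + ↑w) = 0 := by rw [hx0, hew, hw0]; simp
      simpa [Submodule.mem_bot] using this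
    rw [heq, finrank_bot]
end

section
/- Let n > 0 and l ≥ 0 be integers, V an (n+l)-dimensional vector space over 𝔽_q, and W₁ a fixed l-dimensional subspace of V. Let P be a subspace of V of type (m,k), and let N(m₁,k₁;m,k;n+l,n) be the number of subspaces of type (m₁,k₁) contained in P. Then N(m₁,k₁;m,k;n+l,n) > 0 if and only if 0 ≤ k₁ ≤ k ≤ l and 0 ≤ m₁ − k₁ ≤ m − k ≤ n; moreover, when these conditions hold, N(m₁,k₁;m,k;n+l,n) = q^{(m₁−k₁)(k−k₁)} · [m−k over m₁−k₁]_q · [k over k₁]_q. -/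
open Module Submodule

set_option linter.unusedSectionVars false
set_option maxHeartbeats 1600000

section helpers
variable {F V : Type*} [Field F] [Fintype F] [AddCommGroup V] [Module F V] [FiniteDimensional F V]

private lemma card_li {j : ℕ} (hj : j ≤ finrank F V) :
    Nat.card {s : Fin j → V // LinearIndependent F s} =
      ∏ i ∈ Finset.range j, (Fintype.card F ^ finrank F V - Fintype.card F ^ i) := by
  have : Finite V := Module.finite_of_finite F
  rw [card_linearIndependent hj]
  exact Fin.prod_univ_eq_prod_range (fun i => Fintype.card F ^ finrank F V - Fintype.card F ^ i) j

private lemma cardB (T : Submodule F V) {j : ℕ} (hj : j ≤ finrank F T) :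
    Nat.card {f : Fin j → V // (∀ i, f i ∈ T) ∧ LinearIndependent F f} =
      ∏ i ∈ Finset.range j, (Fintype.card F ^ finrank F T - Fintype.card F ^ i) := by
  rw [← card_li hj]
  refine Nat.card_congr ?_
  refine { toFun := fun f => ⟨fun i => ⟨f.1 i, f.2.1 i⟩, ?_⟩,
           invFun := fun f => ⟨fun i => (f.1 i : V), fun i => (f.1 i).2, ?_⟩,
           left_inv := fun f => rfl, right_inv := fun f => rfl }
  · exact LinearIndependent.of_comp T.subtype f.2.2
  · exact f.2.map' T.subtype T.ker_subtype

private lemma card_comp_li {X Y : Type*} [AddCommGroup X] [Module F X] [AddCommGroup Y] [Module F Y]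
    (φ : X →ₗ[F] Y) (hφ : Function.Surjective φ) (r : ℕ) :
    Nat.card {g : Fin r → X // LinearIndependent F (φ ∘ g)} =
      Nat.card (LinearMap.ker φ) ^ r * Nat.card {h : Fin r → Y // LinearIndependent F h} := by
  classical
  set σ := Function.surjInv hφ with hσ
  have hσs : ∀ y, φ (σ y) = y := fun y => Function.surjInv_eq hφ y
  have e : {g : Fin r → X // LinearIndependent F (φ ∘ g)} ≃
      {h : Fin r → Y // LinearIndependent F h} × (Fin r → LinearMap.ker φ) :=
    { toFun := fun g => (⟨φ ∘ g.1, g.2⟩,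
        fun i => ⟨g.1 i - σ (φ (g.1 i)), by simp [LinearMap.mem_ker, map_sub, hσs]⟩),
      invFun := fun hw => ⟨fun i => σ (hw.1.1 i) + (hw.2 i : X), by
        have : φ ∘ (fun i => σ (hw.1.1 i) + (hw.2 i : X)) = hw.1.1 := by
          funext i
          simp [map_add, hσs, LinearMap.mem_ker.mp (hw.2 i).2]
        rw [this]; exact hw.1.2⟩,
      left_inv := fun g => by
        apply Subtype.ext; funext i; simp,
      right_inv := fun hw => by
        refine Prod.ext (Subtype.ext (funext fun i => ?_)) (funext fun i => Subtype.ext ?_)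
        · show φ (σ (hw.1.1 i) + (hw.2 i : X)) = hw.1.1 i
          simp [map_add, hσs, LinearMap.mem_ker.mp (hw.2 i).2]
        · show σ (hw.1.1 i) + (hw.2 i : X) - σ (φ (σ (hw.1.1 i) + (hw.2 i : X))) = (hw.2 i : X)
          rw [map_add, hσs, LinearMap.mem_ker.mp (hw.2 i).2, add_zero, add_sub_cancel_left] }
  rw [Nat.card_congr e, Nat.card_prod, Nat.card_fun, Nat.card_eq_fintype_card (α := Fin r),
    Fintype.card_fin, mul_comm]

private lemma cardA (W S : Submodule F V) {r a b : ℕ} (ha : finrank F S = a)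
    (hb : finrank F (S ⊓ W : Submodule F V) = b) (hr : r ≤ a - b) (hba : b ≤ a) :
    Nat.card {g : Fin r → V // (∀ j, g j ∈ S) ∧ LinearIndependent F (W.mkQ ∘ g)} =
      (Fintype.card F ^ b) ^ r *
        ∏ i ∈ Finset.range r, (Fintype.card F ^ (a - b) - Fintype.card F ^ i) := by
  classical
  set φ₀ : S →ₗ[F] V ⧸ W := W.mkQ ∘ₗ S.subtype with hφ₀
  have e1 : {g : Fin r → V // (∀ j, g j ∈ S) ∧ LinearIndependent F (W.mkQ ∘ g)} ≃
      {g : Fin r → S // LinearIndependent F (φ₀ ∘ g)} :=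
    { toFun := fun g => ⟨fun i => ⟨g.1 i, g.2.1 i⟩, g.2.2⟩,
      invFun := fun g => ⟨fun i => (g.1 i : V), ⟨fun i => (g.1 i).2, g.2⟩⟩,
      left_inv := fun g => rfl, right_inv := fun g => rfl }
  have hker : LinearMap.ker φ₀ = comap S.subtype W := by
    rw [hφ₀, LinearMap.ker_comp, Submodule.ker_mkQ]
  have ekera : (LinearMap.ker φ₀ : Type _) ≃ (S ⊓ W : Submodule F V) := by
    rw [hker]
    exact ((Submodule.equivMapOfInjective S.subtype (Submodule.injective_subtype S)
      (comap S.subtype W)).trans (LinearEquiv.ofEq _ _ (Submodule.map_comap_subtype S W))).toEquiv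
  have hcardker : Nat.card (LinearMap.ker φ₀) = Fintype.card F ^ b := by
    rw [Nat.card_congr ekera]
    have : Fintype (S ⊓ W : Submodule F V) := by
      have : Finite V := Module.finite_of_finite F
      exact Fintype.ofFinite _
    rw [Nat.card_eq_fintype_card, card_eq_pow_finrank (K := F), hb]
  have hkerrank : finrank F (LinearMap.ker φ₀) = b := by
    rw [← hb]
    exact (LinearEquiv.finrank_eq (LinearEquiv.ofEq _ _ hker |>.trans
      ((Submodule.equivMapOfInjective S.subtype (Submodule.injective_subtype S)
      (comap S.subtype W)).trans (LinearEquiv.ofEq _ _ (Submodule.map_comap_subtype S W)))))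
  have hrange : finrank F (LinearMap.range φ₀) = a - b := by
    have h0 := LinearMap.finrank_range_add_finrank_ker φ₀
    rw [hkerrank, ha] at h0
    omega
  set φ : S →ₗ[F] LinearMap.range φ₀ := φ₀.rangeRestrict with hφ
  have e2 : {g : Fin r → S // LinearIndependent F (φ₀ ∘ g)} ≃
      {g : Fin r → S // LinearIndependent F (φ ∘ g)} := by
    refine Equiv.subtypeEquivRight fun g => ⟨fun h => ?_, fun h => ?_⟩
    · refine LinearIndependent.of_comp (LinearMap.range φ₀).subtype ?_
      have : (LinearMap.range φ₀).subtype ∘ (φ ∘ g) = φ₀ ∘ g := by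
        funext i; rfl
      rwa [this]
    · have : φ₀ ∘ g = (LinearMap.range φ₀).subtype ∘ (φ ∘ g) := by funext i; rfl
      rw [this, ← Function.comp_assoc]
      exact h.map' _ (Submodule.ker_subtype _)
  rw [Nat.card_congr (e1.trans e2),
    card_comp_li φ (LinearMap.surjective_rangeRestrict φ₀) r,
    LinearMap.ker_rangeRestrict, hcardker, card_li (by rw [hrange]; exact hr), hrange]

private lemma disj_of_li_mkQ (W : Submodule F V) {r : ℕ} {g : Fin r → V}
    (hg : LinearIndependent F (W.mkQ ∘ g)) :
    Disjoint (span F (Set.range g)) W := by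
  rw [Submodule.disjoint_def]
  intro x hxg hxW
  rw [mem_span_range_iff_exists_fun] at hxg
  obtain ⟨c, hc⟩ := hxg
  have h0 : ∑ i, c i • (W.mkQ ∘ g) i = 0 := by
    have : W.mkQ x = 0 := (Submodule.Quotient.mk_eq_zero W).mpr hxW
    rw [← hc] at this
    simpa [map_sum, map_smul] using this
  have := Fintype.linearIndependent_iff.mp hg c h0
  rw [← hc]
  simp [this]

private lemma frame_span (W : Submodule F V) {k₁ r : ℕ} (f : Fin k₁ → V) (g : Fin r → V)
    (hfW : ∀ i, f i ∈ W) (hf : LinearIndependent F f) (hg : LinearIndependent F (W.mkQ ∘ g)) :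
    finrank F (span F (Set.range f) ⊔ span F (Set.range g) : Submodule F V) = k₁ + r ∧
    (span F (Set.range f) ⊔ span F (Set.range g)) ⊓ W = span F (Set.range f) := by
  have hfWs : span F (Set.range f) ≤ W := by
    rw [Submodule.span_le]; rintro x ⟨i, rfl⟩; exact hfW i
  have hgd : Disjoint (span F (Set.range g)) W := disj_of_li_mkQ W hg
  have hli : LinearIndependent F (Sum.elim f g) :=
    hf.sum_type (hg.of_comp W.mkQ) ((hgd.mono_right hfWs).symm)
  constructor
  · have h1 : span F (Set.range (Sum.elim f g)) =
        span F (Set.range f) ⊔ span F (Set.range g) := by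
      rw [Set.Sum.elim_range, Submodule.span_union]
    rw [← h1, finrank_span_eq_card hli]
    simp
  · rw [sup_inf_assoc_of_le _ hfWs, disjoint_iff.mp hgd, sup_bot_eq]

private lemma card_sigma_const {ι : Type*} [Finite ι] (f : ι → Type*) [∀ i, Finite (f i)] (D : ℕ)
    (h : ∀ i, Nat.card (f i) = D) : Nat.card (Σ i, f i) = Nat.card ι * D := by
  classical
  cases nonempty_fintype ι
  have : ∀ i, Fintype (f i) := fun i => Fintype.ofFinite _
  simp only [Nat.card_eq_fintype_card]
  rw [Fintype.card_sigma]
  calc ∑ i, Fintype.card (f i) = ∑ _i : ι, D := by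
        refine Finset.sum_congr rfl fun i _ => ?_
        rw [← Nat.card_eq_fintype_card, h i]
    _ = Fintype.card ι * D := by rw [Finset.sum_const, Finset.card_univ, smul_eq_mul]

/-- The type of frames for a subspace `S` relative to `W`. -/
private def FramesType (W : Submodule F V) (k₁ r : ℕ) (S : Submodule F V) : Type _ :=
  {p : (Fin k₁ → V) × (Fin r → V) // (∀ i, p.1 i ∈ S ⊓ W) ∧ LinearIndependent F p.1 ∧
    (∀ j, p.2 j ∈ S) ∧ LinearIndependent F (W.mkQ ∘ p.2)}

private lemma card_frames (W : Submodule F V) (k₁ r : ℕ) (S : Submodule F V) {a b : ℕ}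
    (ha : finrank F S = a) (hb : finrank F (S ⊓ W : Submodule F V) = b)
    (hk₁b : k₁ ≤ b) (hr : r ≤ a - b) (hba : b ≤ a) :
    Nat.card (FramesType W k₁ r S) =
      (∏ i ∈ Finset.range k₁, (Fintype.card F ^ b - Fintype.card F ^ i)) *
      ((Fintype.card F ^ b) ^ r *
        ∏ i ∈ Finset.range r, (Fintype.card F ^ (a - b) - Fintype.card F ^ i)) := by
  have e : FramesType W k₁ r S ≃
      {f : Fin k₁ → V // (∀ i, f i ∈ S ⊓ W) ∧ LinearIndependent F f} ×
      {g : Fin r → V // (∀ j, g j ∈ S) ∧ LinearIndependent F (W.mkQ ∘ g)} :=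
    { toFun := fun p => (⟨p.1.1, p.2.1, p.2.2.1⟩, ⟨p.1.2, p.2.2.2⟩),
      invFun := fun fg => ⟨(fg.1.1, fg.2.1), fg.1.2.1, fg.1.2.2, fg.2.2.1, fg.2.2.2⟩,
      left_inv := fun p => rfl, right_inv := fun fg => rfl }
  rw [Nat.card_congr e, Nat.card_prod, cardB (S ⊓ W) (by rw [hb]; exact hk₁b), hb,
    cardA W S ha hb hr hba]

private lemma main_count (W P : Submodule F V) (hWP : W ≤ P) {m k k₁ r : ℕ}
    (hm : finrank F P = m) (hk : finrank F W = k)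
    (h1 : k₁ ≤ k) (hkm : k ≤ m) (hr : r ≤ m - k) :
    Nat.card {S : Submodule F V // S ≤ P ∧ finrank F S = k₁ + r ∧
        finrank F (S ⊓ W : Submodule F V) = k₁} *
      ((∏ i ∈ Finset.range k₁, (Fintype.card F ^ k₁ - Fintype.card F ^ i)) *
        ((Fintype.card F ^ k₁) ^ r *
          ∏ i ∈ Finset.range r, (Fintype.card F ^ r - Fintype.card F ^ i))) =
    (∏ i ∈ Finset.range k₁, (Fintype.card F ^ k - Fintype.card F ^ i)) *
      ((Fintype.card F ^ k) ^ r *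
        ∏ i ∈ Finset.range r, (Fintype.card F ^ (m - k) - Fintype.card F ^ i)) := by
  classical
  haveI hfinV : Finite V := Module.finite_of_finite F
  haveI hfinSub : Finite (Submodule F V) :=
    Finite.of_injective (fun S : Submodule F V => (S : Set V)) SetLike.coe_injective
  haveI : Finite (FramesType (F := F) W k₁ r P) := by
    unfold FramesType; exact Subtype.finite
  set q := Fintype.card F with hq
  set 𝒮 := {S : Submodule F V // S ≤ P ∧ finrank F S = k₁ + r ∧
      finrank F (S ⊓ W : Submodule F V) = k₁} with h𝒮
  have key : ∀ p : FramesType W k₁ r P,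
      (span F (Set.range p.1.1) ⊔ span F (Set.range p.1.2)) ≤ P ∧
      finrank F (span F (Set.range p.1.1) ⊔ span F (Set.range p.1.2) : Submodule F V)
        = k₁ + r ∧
      finrank F ((span F (Set.range p.1.1) ⊔ span F (Set.range p.1.2)) ⊓ W : Submodule F V)
        = k₁ := by
    rintro ⟨⟨f, g⟩, hf1, hf2, hg1, hg2⟩
    have hfW : ∀ i, f i ∈ W := fun i => (hf1 i).2
    obtain ⟨hdim, hinf⟩ := frame_span W f g hfW hf2 hg2
    refine ⟨?_, hdim, ?_⟩
    · refine sup_le (span_le.mpr ?_) (span_le.mpr ?_)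
      · rintro x ⟨i, rfl⟩; exact (hf1 i).1
      · rintro x ⟨j, rfl⟩; exact hg1 j
    · rw [hinf, finrank_span_eq_card hf2, Fintype.card_fin]
  set Φ : FramesType W k₁ r P → 𝒮 := fun p =>
    ⟨span F (Set.range p.1.1) ⊔ span F (Set.range p.1.2), key p⟩ with hΦ
  have fiber_equiv : ∀ S₀ : 𝒮, {p : FramesType W k₁ r P // Φ p = S₀} ≃
      FramesType W k₁ r S₀.1 := by
    intro S₀
    refine
      { toFun := fun p => ⟨p.1.1, ?_, p.1.2.2.1, ?_, p.1.2.2.2.2⟩,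
        invFun := fun p => ⟨⟨p.1, ?_, p.2.2.1, ?_, p.2.2.2.2⟩, ?_⟩,
        left_inv := fun p => Subtype.ext (Subtype.ext rfl),
        right_inv := fun p => Subtype.ext rfl }
    · intro i
      refine ⟨?_, (p.1.2.1 i).2⟩
      have h1' : p.1.1.1 i ∈ span F (Set.range p.1.1.1) := subset_span ⟨i, rfl⟩
      have h2 : span F (Set.range p.1.1.1) ≤ S₀.1 := by
        rw [← congrArg Subtype.val p.2]
        exact le_sup_left
      exact h2 h1'
    · intro j
      have h1' : p.1.1.2 j ∈ span F (Set.range p.1.1.2) := subset_span ⟨j, rfl⟩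
      have h2 : span F (Set.range p.1.1.2) ≤ S₀.1 := by
        rw [← congrArg Subtype.val p.2]
        exact le_sup_right
      exact h2 h1'
    · intro i
      exact inf_le_inf_right W S₀.2.1 (p.2.1 i)
    · intro j
      exact S₀.2.1 (p.2.2.2.1 j)
    · apply Subtype.ext
      show span F (Set.range p.1.1) ⊔ span F (Set.range p.1.2) = S₀.1
      have hle : span F (Set.range p.1.1) ⊔ span F (Set.range p.1.2) ≤ S₀.1 := by
        refine sup_le (span_le.mpr ?_) (span_le.mpr ?_)
        · rintro x ⟨i, rfl⟩; exact (p.2.1 i).1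
        · rintro x ⟨j, rfl⟩; exact p.2.2.2.1 j
      have hfW : ∀ i, p.1.1 i ∈ W := fun i => (p.2.1 i).2
      obtain ⟨hdim, -⟩ := frame_span W p.1.1 p.1.2 hfW p.2.2.1 p.2.2.2.2
      exact Submodule.eq_of_le_of_finrank_le hle (by rw [hdim, S₀.2.2.1])
  have hPinfW : (P ⊓ W : Submodule F V) = W := inf_eq_right.mpr hWP
  have hPb : finrank F (P ⊓ W : Submodule F V) = k := by rw [hPinfW, hk]
  have htot : Nat.card (FramesType W k₁ r P) =
      (∏ i ∈ Finset.range k₁, (q ^ k - q ^ i)) *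
        ((q ^ k) ^ r * ∏ i ∈ Finset.range r, (q ^ (m - k) - q ^ i)) :=
    card_frames W k₁ r P hm hPb h1 hr hkm
  have hfib : ∀ S₀ : 𝒮, Nat.card {p : FramesType W k₁ r P // Φ p = S₀} =
      (∏ i ∈ Finset.range k₁, (q ^ k₁ - q ^ i)) *
        ((q ^ k₁) ^ r * ∏ i ∈ Finset.range r, (q ^ r - q ^ i)) := by
    intro S₀
    rw [Nat.card_congr (fiber_equiv S₀)]
    have := card_frames W k₁ r S₀.1 S₀.2.2.1 S₀.2.2.2 le_rfl
      (by omega) (by omega)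
    simpa using this
  have hsig : Nat.card (FramesType W k₁ r P) = Nat.card 𝒮 *
      ((∏ i ∈ Finset.range k₁, (q ^ k₁ - q ^ i)) *
        ((q ^ k₁) ^ r * ∏ i ∈ Finset.range r, (q ^ r - q ^ i))) := by
    rw [← Nat.card_congr (Equiv.sigmaFiberEquiv Φ)]
    exact card_sigma_const _ _ hfib
  rw [← htot, hsig]

end helpers

private lemma cast_prod_q {q : ℕ} (hq : 2 ≤ q) {d j : ℕ} (hj : j ≤ d) :
    ((∏ i ∈ Finset.range j, (q ^ d - q ^ i) : ℕ) : ℚ) =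
      gaussBinom q d j * ((∏ i ∈ Finset.range j, (q ^ j - q ^ i) : ℕ) : ℚ) := by
  rw [gaussBinom, Nat.cast_prod, Nat.cast_prod, ← Finset.prod_mul_distrib]
  refine Finset.prod_congr rfl fun i hi => ?_
  rw [Finset.mem_range] at hi
  have h1 : q ^ i ≤ q ^ d := Nat.pow_le_pow_right (by omega) (by omega)
  have h2 : q ^ i ≤ q ^ j := Nat.pow_le_pow_right (by omega) hi.le
  rw [Nat.cast_sub h1, Nat.cast_sub h2]
  have hne : ((q : ℚ) ^ (j - i) - 1) ≠ 0 := by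
    have : (1 : ℚ) < (q : ℚ) ^ (j - i) := by
      apply one_lt_pow₀ (by exact_mod_cast by omega : (1:ℚ) < q) (by omega)
    linarith
  rw [div_mul_eq_mul_div, eq_div_iff hne]
  push_cast
  have e1 : (q : ℚ) ^ d = q ^ i * q ^ (d - i) := by rw [← pow_add]; congr 1; omega
  have e2 : (q : ℚ) ^ j = q ^ i * q ^ (j - i) := by rw [← pow_add]; congr 1; omega
  rw [e1, e2]; ring

theorem stmt16 {F V : Type*} [Field F] [Fintype F] [AddCommGroup V] [Module F V]
    [FiniteDimensional F V] {q n l m k m₁ k₁ : ℕ} (hq : Fintype.card F = q)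
    (hn : 0 < n) (hV : finrank F V = n + l)
    (W₁ : Submodule F V) (hW₁ : finrank F ↥W₁ = l)
    (P : Submodule F V) (hP : finrank F ↥P = m) (hPk : finrank F ↥(P ⊓ W₁) = k) :
    (0 < {S : Submodule F V | S ≤ P ∧ finrank F ↥S = m₁ ∧
            finrank F ↥(S ⊓ W₁) = k₁}.ncard ↔
        (k₁ ≤ k ∧ k ≤ l ∧ k₁ ≤ m₁ ∧ (m₁ : ℤ) - (k₁ : ℤ) ≤ (m : ℤ) - (k : ℤ) ∧
          m - k ≤ n)) ∧
      ((k₁ ≤ k ∧ k ≤ l ∧ k₁ ≤ m₁ ∧ (m₁ : ℤ) - (k₁ : ℤ) ≤ (m : ℤ) - (k : ℤ) ∧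
          m - k ≤ n) →
        ({S : Submodule F V | S ≤ P ∧ finrank F ↥S = m₁ ∧
            finrank F ↥(S ⊓ W₁) = k₁}.ncard : ℚ) =
          (q : ℚ) ^ ((m₁ - k₁) * (k - k₁)) * gaussBinom q (m - k) (m₁ - k₁) *
            gaussBinom q k k₁) := by
  classical
  haveI hfinV : Finite V := Module.finite_of_finite F
  haveI hfinSub : Finite (Submodule F V) :=
    Finite.of_injective (fun S : Submodule F V => (S : Set V)) SetLike.coe_injective
  have h2q : 2 ≤ q := by rw [← hq]; exact Fintype.one_lt_card
  have hWP : P ⊓ W₁ ≤ P := inf_le_left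
  have hkm : k ≤ m := by rw [← hP, ← hPk]; exact Submodule.finrank_mono hWP
  have hkl : k ≤ l := by rw [← hW₁, ← hPk]; exact Submodule.finrank_mono inf_le_right
  have hmkn : m - k ≤ n := by
    have hsup : finrank F (P ⊔ W₁ : Submodule F V) + finrank F (P ⊓ W₁ : Submodule F V)
        = m + l := by
      rw [Submodule.finrank_sup_add_finrank_inf_eq, hP, hW₁]
    have hle : finrank F (P ⊔ W₁ : Submodule F V) ≤ n + l := by
      rw [← hV]; exact Submodule.finrank_le _
    omega
  have hSW : ∀ S : Submodule F V, S ≤ P → S ⊓ W₁ = S ⊓ (P ⊓ W₁) := fun S h => by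
    rw [← inf_assoc, inf_eq_left.mpr h]
  have hncard : ∀ m₁' : ℕ,
      {S : Submodule F V | S ≤ P ∧ finrank F ↥S = m₁' ∧ finrank F ↥(S ⊓ W₁) = k₁}.ncard
      = Nat.card {S : Submodule F V // S ≤ P ∧ finrank F ↥S = m₁' ∧
          finrank F (S ⊓ (P ⊓ W₁) : Submodule F V) = k₁} := by
    intro m₁'
    rw [← Nat.card_coe_set_eq]
    refine Nat.card_congr (Equiv.subtypeEquivRight fun S => ?_)
    simp only [Set.mem_setOf_eq]
    constructor
    · rintro ⟨h1, h2, h3⟩; exact ⟨h1, h2, by rwa [← hSW S h1]⟩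
    · rintro ⟨h1, h2, h3⟩; exact ⟨h1, h2, by rwa [hSW S h1]⟩
  constructor
  · constructor
    · -- positivity implies conditions
      intro hpos
      obtain ⟨S, hS⟩ := (Set.ncard_pos (Set.toFinite _)).mp hpos
      obtain ⟨hSP, hSm, hSk⟩ := hS
      have hc1 : k₁ ≤ k := by
        rw [← hPk, ← hSk, hSW S hSP]
        exact Submodule.finrank_mono inf_le_right
      have hc3 : k₁ ≤ m₁ := by
        rw [← hSm, ← hSk]
        exact Submodule.finrank_mono inf_le_left
      have hc4 : (m₁ : ℤ) - (k₁ : ℤ) ≤ (m : ℤ) - (k : ℤ) := by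
        have e := Submodule.finrank_sup_add_finrank_inf_eq S (P ⊓ W₁)
        rw [hSm, hPk, ← hSW S hSP, hSk] at e
        have hle : finrank F (S ⊔ (P ⊓ W₁) : Submodule F V) ≤ m := by
          rw [← hP]
          exact Submodule.finrank_mono (sup_le hSP hWP)
        omega
      exact ⟨hc1, hkl, hc3, hc4, hmkn⟩
    · -- conditions imply positivity
      rintro ⟨hc1, -, hc3, hc4, -⟩
      set r := m₁ - k₁ with hrdef
      have hm₁ : m₁ = k₁ + r := by omega
      have hr : r ≤ m - k := by omega
      rw [hm₁, hncard (k₁ + r)]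
      have key := main_count (P ⊓ W₁) P hWP hP hPk hc1 hkm hr
      have hT : 0 < (∏ i ∈ Finset.range k₁, (Fintype.card F ^ k - Fintype.card F ^ i)) *
          ((Fintype.card F ^ k) ^ r *
            ∏ i ∈ Finset.range r, (Fintype.card F ^ (m - k) - Fintype.card F ^ i)) := by
        have hq2 : 1 < Fintype.card F := Fintype.one_lt_card
        refine Nat.mul_pos (Finset.prod_pos fun i hi => ?_) (Nat.mul_pos
          (pow_pos (pow_pos Fintype.card_pos k) r) (Finset.prod_pos fun i hi => ?_))
        · rw [Finset.mem_range] at hi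
          have : Fintype.card F ^ i < Fintype.card F ^ k :=
            Nat.pow_lt_pow_right hq2 (by omega)
          omega
        · rw [Finset.mem_range] at hi
          have : Fintype.card F ^ i < Fintype.card F ^ (m - k) :=
            Nat.pow_lt_pow_right hq2 (by omega)
          omega
      rw [← key] at hT
      exact Nat.pos_of_ne_zero fun h0 => by simp [h0] at hT
  · -- the formula
    rintro ⟨hc1, -, hc3, hc4, -⟩
    set r := m₁ - k₁ with hrdef
    have hm₁ : m₁ = k₁ + r := by omega
    have hr : r ≤ m - k := by omega
    rw [hm₁, hncard (k₁ + r)]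
    have key := main_count (P ⊓ W₁) P hWP hP hPk hc1 hkm hr
    rw [hq] at key
    set N := Nat.card {S : Submodule F V // S ≤ P ∧ finrank F ↥S = k₁ + r ∧
        finrank F (S ⊓ (P ⊓ W₁) : Submodule F V) = k₁} with hN
    have hq2 : 1 < q := by omega
    have hD : 0 < (∏ i ∈ Finset.range k₁, (q ^ k₁ - q ^ i)) *
        ((q ^ k₁) ^ r * ∏ i ∈ Finset.range r, (q ^ r - q ^ i)) := by
      refine Nat.mul_pos (Finset.prod_pos fun i hi => ?_) (Nat.mul_pos
        (pow_pos (pow_pos (by omega : 0 < q) k₁) r) (Finset.prod_pos fun i hi => ?_))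
      · rw [Finset.mem_range] at hi
        have : q ^ i < q ^ k₁ := Nat.pow_lt_pow_right hq2 (by omega)
        omega
      · rw [Finset.mem_range] at hi
        have : q ^ i < q ^ r := Nat.pow_lt_pow_right hq2 (by omega)
        omega
    have hDQ : ((((∏ i ∈ Finset.range k₁, (q ^ k₁ - q ^ i)) *
        ((q ^ k₁) ^ r * ∏ i ∈ Finset.range r, (q ^ r - q ^ i))) : ℕ) : ℚ) ≠ 0 := by
      exact_mod_cast hD.ne'
    have keyQ : (N : ℚ) * (((∏ i ∈ Finset.range k₁, (q ^ k₁ - q ^ i)) *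
        ((q ^ k₁) ^ r * ∏ i ∈ Finset.range r, (q ^ r - q ^ i)) : ℕ) : ℚ) =
        ((((∏ i ∈ Finset.range k₁, (q ^ k - q ^ i)) *
          ((q ^ k) ^ r * ∏ i ∈ Finset.range r, (q ^ (m - k) - q ^ i))) : ℕ) : ℚ) := by
      exact_mod_cast congrArg (Nat.cast : ℕ → ℚ) key
    refine mul_right_cancel₀ hDQ ?_
    rw [keyQ]
    have hB : (((q ^ k) ^ r : ℕ) : ℚ) =
        (q : ℚ) ^ (r * (k - k₁)) * (((q ^ k₁) ^ r : ℕ) : ℚ) := by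
      push_cast
      rw [← pow_mul, ← pow_mul, ← pow_add]
      congr 1
      obtain ⟨c, rfl⟩ := Nat.exists_eq_add_of_le hc1
      simp [Nat.add_sub_cancel_left]
      ring
    rw [Nat.cast_mul, Nat.cast_mul, cast_prod_q h2q hc1, cast_prod_q h2q hr, hB]
    push_cast
    ring
end

section
/- Let n > 0 and l ≥ 0 be integers, V an (n+l)-dimensional vector space over 𝔽_q, and W₁ a fixed l-dimensional subspace of V. Let m ≥ 2, 0 ≤ k ≤ m, m ≤ n if k = 0, and let X be a subspace of V of type (2m−1,t), where t = max{0, 2m−1−n} if k = 0 and t = m+k−1 if k ≥ 1 (so in particular k ≤ t ≤ l and 2m−1−t ≤ n). Then the family ℱ of all subspaces of type (m,k) contained in X is a nonempty intersecting family with covering number τ(ℱ) = m. -/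
open Module

/-- A vector space is not the union of two proper subspaces. -/
lemma aux_exists_notMem_two {F V : Type*} [Field F] [AddCommGroup V] [Module F V]
    [FiniteDimensional F V] {X P Q : Submodule F V}
    (hP : P ≤ X) (hQ : Q ≤ X) (hPX : finrank F P < finrank F X)
    (hQX : finrank F Q < finrank F X) :
    ∃ v ∈ X, v ∉ P ∧ v ∉ Q := by
  have hPlt : P < X := lt_of_le_of_ne hP (by rintro rfl; exact lt_irrefl _ hPX)
  have hQlt : Q < X := lt_of_le_of_ne hQ (by rintro rfl; exact lt_irrefl _ hQX)
  obtain ⟨a, haX, haP⟩ := SetLike.exists_of_lt hPlt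
  obtain ⟨b, hbX, hbQ⟩ := SetLike.exists_of_lt hQlt
  by_cases haQ : a ∈ Q
  · by_cases hbP : b ∈ P
    · refine ⟨a + b, X.add_mem haX hbX, ?_, ?_⟩
      · intro h; exact haP ((P.add_mem_iff_left hbP).mp h)
      · intro h; exact hbQ ((Q.add_mem_iff_right haQ).mp h)
    · exact ⟨b, hbX, hbP, hbQ⟩
  · exact ⟨a, haX, haP, haQ⟩

/-- Greedy extension lemma: extend `T` to a subspace `S ≤ X` of dimension `finrank T + d`
keeping `S ⊓ U = T ⊓ U` and `S ⊓ W = ⊥`. -/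
lemma aux_build' {F V : Type*} [Field F] [AddCommGroup V] [Module F V]
    [FiniteDimensional F V] (X U W : Submodule F V)
    (hUX : U ≤ X) (hWX : W ≤ X) (m : ℕ) :
    ∀ (d : ℕ) (T : Submodule F V), T ≤ X → finrank F ↥T + d = m → T ⊓ W = ⊥ →
      finrank F ↥U + m ≤ finrank F ↥X + finrank F ↥(T ⊓ U) →
      finrank F ↥W + m ≤ finrank F ↥X →
      ∃ S : Submodule F V, T ≤ S ∧ S ≤ X ∧ finrank F ↥S = m ∧
        S ⊓ U = T ⊓ U ∧ S ⊓ W = ⊥ := by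
  intro d
  induction d with
  | zero => exact fun T hTX hTm hTW _ _ => ⟨T, le_rfl, hTX, by omega, rfl, hTW⟩
  | succ d ih =>
    intro T hTX hTm hTW hUarith hWarith
    -- T ⊔ U is a proper subspace of X
    have hsupU : finrank F ↥(T ⊔ U) + finrank F ↥(T ⊓ U)
        = finrank F ↥T + finrank F ↥U := Submodule.finrank_sup_add_finrank_inf_eq T U
    have hsupW : finrank F ↥(T ⊔ W) + finrank F ↥(T ⊓ W)
        = finrank F ↥T + finrank F ↥W := Submodule.finrank_sup_add_finrank_inf_eq T W
    rw [hTW, finrank_bot] at hsupW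
    have hPX : finrank F ↥(T ⊔ U) < finrank F ↥X := by omega
    have hQX : finrank F ↥(T ⊔ W) < finrank F ↥X := by omega
    obtain ⟨v, hvX, hvP, hvQ⟩ := aux_exists_notMem_two (sup_le hTX hUX) (sup_le hTX hWX) hPX hQX
    have hvT : v ∉ T := fun h => hvP (Submodule.mem_sup_left h)
    have hv0 : v ≠ 0 := fun h => hvT (h ▸ T.zero_mem)
    set T' : Submodule F V := T ⊔ (F ∙ v) with hT'
    have hTT' : T ≤ T' := le_sup_left
    have hvT' : v ∈ T' := Submodule.mem_sup_right (Submodule.mem_span_singleton_self v)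
    have hT'X : T' ≤ X := sup_le hTX ((Submodule.span_singleton_le_iff_mem v X).mpr hvX)
    -- finrank T' = finrank T + 1
    have hlt : T < T' := lt_of_le_of_ne hTT' (fun h => hvT (h ▸ hvT'))
    have h1 : finrank F ↥T < finrank F ↥T' := Submodule.finrank_lt_finrank_of_lt hlt
    have h2 : finrank F ↥T' + finrank F ↥(T ⊓ (F ∙ v)) = finrank F ↥T + finrank F ↥(F ∙ v) :=
      Submodule.finrank_sup_add_finrank_inf_eq T (F ∙ v)
    have hspan1 : finrank F ↥(F ∙ v) = 1 := finrank_span_singleton hv0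
    have hT'rank : finrank F ↥T' = finrank F ↥T + 1 := by omega
    -- the intersections with U and W do not grow
    have hkey : ∀ Y : Submodule F V, Y ≤ X → v ∉ T ⊔ Y → T' ⊓ Y = T ⊓ Y := by
      intro Y _ hvY
      apply le_antisymm
      · rintro x ⟨hxT', hxY⟩
        obtain ⟨y, hy, z, hz, rfl⟩ := Submodule.mem_sup.mp hxT'
        obtain ⟨c, rfl⟩ := Submodule.mem_span_singleton.mp hz
        rcases eq_or_ne c 0 with rfl | hc
        · exact ⟨by simpa using hy, hxY⟩
        · exfalso
          apply hvY
          have : c • v = (y + c • v) - y := by abel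
          have hmem : c • v ∈ T ⊔ Y := this ▸
            Submodule.sub_mem _ (Submodule.mem_sup_right hxY) (Submodule.mem_sup_left hy)
          have := Submodule.smul_mem _ c⁻¹ hmem
          rwa [smul_smul, inv_mul_cancel₀ hc, one_smul] at this
      · exact inf_le_inf_right Y hTT'
    have hT'U : T' ⊓ U = T ⊓ U := hkey U hUX hvP
    have hT'W : T' ⊓ W = ⊥ := by rw [hkey W hWX hvQ, hTW]
    obtain ⟨S, hTS, hSX, hSm, hSU, hSW⟩ := ih T' hT'X (by omega) hT'W
      (by rw [hT'U]; omega) hWarith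
    exact ⟨S, le_trans hTT' hTS, hSX, hSm, by rw [hSU, hT'U], hSW⟩

/-- Existence of a subspace of `X` of dimension `m` meeting `W₁` in dimension `k`
and avoiding `W`. -/
lemma aux_exists_good {F V : Type*} [Field F] [AddCommGroup V] [Module F V]
    [FiniteDimensional F V] (X W₁ W : Submodule F V) (m k : ℕ)
    (hWX : W ≤ X) (hkm : k ≤ m)
    (hmX : m ≤ finrank F X)
    (hUar : finrank F ↥(X ⊓ W₁) + m ≤ finrank F X + k)
    (hWar : finrank F ↥W + m ≤ finrank F X)
    (hKc : finrank F ↥(X ⊓ W₁ ⊓ W) + k ≤ finrank F ↥(X ⊓ W₁)) :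
    ∃ S : Submodule F V, S ≤ X ∧ finrank F ↥S = m ∧ finrank F ↥(S ⊓ W₁) = k ∧ S ⊓ W = ⊥ := by
  set U : Submodule F V := X ⊓ W₁ with hUdef
  -- Step 1: find K ≤ U of dimension k with K ⊓ W = ⊥
  obtain ⟨K, -, hKU, hKk, -, hKW'⟩ :=
    aux_build' U ⊥ (U ⊓ W) bot_le inf_le_left k k ⊥ bot_le
      (by simp) (by simp) (by simp; omega) (by simpa using hKc)
  have hKW : K ⊓ W = ⊥ := by
    have : K ⊓ W = K ⊓ (U ⊓ W) := by
      rw [← inf_assoc, inf_eq_left.mpr hKU]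
    rw [this, hKW']
  -- Step 2: extend K to S ≤ X of dimension m with S ⊓ U = K, S ⊓ W = ⊥
  have hKUeq : K ⊓ U = K := inf_eq_left.mpr hKU
  obtain ⟨S, hKS, hSX, hSm, hSU, hSW⟩ :=
    aux_build' X U W inf_le_left hWX m (m - k) K (le_trans hKU inf_le_left)
      (by omega) hKW (by rw [hKUeq, hKk]; exact hUar) hWar
  refine ⟨S, hSX, hSm, ?_, hSW⟩
  have : S ⊓ W₁ = S ⊓ U := by
    rw [hUdef, ← inf_assoc, inf_eq_left.mpr hSX]
  rw [this, hSU, hKUeq, hKk]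

theorem stmt18 {F V : Type*} [Field F] [Fintype F] [AddCommGroup V] [Module F V]
    [FiniteDimensional F V] {n l m k t : ℕ}
    (hn : 0 < n) (hV : finrank F V = n + l)
    (W₁ : Submodule F V) (hW₁ : finrank F ↥W₁ = l)
    (hm : 2 ≤ m) (hkm : k ≤ m) (hk0 : k = 0 → m ≤ n)
    (ht : t = if k = 0 then 2 * m - 1 - n else m + k - 1)
    (hkt : k ≤ t) (htl : t ≤ l) (htn : 2 * m - 1 - t ≤ n)
    (X : Submodule F V) (hX : finrank F ↥X = 2 * m - 1)
    (hXt : finrank F ↥(X ⊓ W₁) = t) :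
    {S : Submodule F V | S ≤ X ∧ finrank F ↥S = m ∧
        finrank F ↥(S ⊓ W₁) = k}.Nonempty ∧
      IsIntersectingFamily {S : Submodule F V | S ≤ X ∧ finrank F ↥S = m ∧
        finrank F ↥(S ⊓ W₁) = k} ∧
      coveringNumber {S : Submodule F V | S ≤ X ∧ finrank F ↥S = m ∧
        finrank F ↥(S ⊓ W₁) = k} = m := by
  set 𝒮 := {S : Submodule F V | S ≤ X ∧ finrank F ↥S = m ∧ finrank F ↥(S ⊓ W₁) = k} with h𝒮
  -- basic arithmetic
  have htle : t + m ≤ 2 * m - 1 + k := by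
    rcases eq_or_ne k 0 with hk | hk
    · have := hk0 hk; rw [hk, if_pos rfl] at ht; omega
    · rw [if_neg hk] at ht; omega
  have hmX : m ≤ finrank F ↥X := by omega
  -- key: for any W of dimension ≤ m - 1, there is a member of 𝒮 avoiding W
  have key : ∀ W : Submodule F V, finrank F ↥W + m ≤ 2 * m - 1 →
      ∃ S ∈ 𝒮, S ⊓ (W ⊓ X) = ⊥ := by
    intro W hW
    have hW'X : W ⊓ X ≤ X := inf_le_right
    have hW'le : finrank F ↥(W ⊓ X) ≤ finrank F ↥W :=
      Submodule.finrank_mono inf_le_left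
    have hKc : finrank F ↥(X ⊓ W₁ ⊓ (W ⊓ X)) + k ≤ finrank F ↥(X ⊓ W₁) := by
      rcases eq_or_ne k 0 with hk | hk
      · have : finrank F ↥(X ⊓ W₁ ⊓ (W ⊓ X)) ≤ finrank F ↥(X ⊓ W₁) :=
          Submodule.finrank_mono inf_le_left
        omega
      · rw [if_neg hk] at ht
        have h1 : finrank F ↥(X ⊓ W₁ ⊓ (W ⊓ X)) ≤ finrank F ↥(W ⊓ X) :=
          Submodule.finrank_mono inf_le_right
        omega
    obtain ⟨S, hSX, hSm, hSW₁, hSW⟩ :=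
      aux_exists_good X W₁ (W ⊓ X) m k hW'X hkm hmX (by omega) (by omega) hKc
    exact ⟨S, ⟨hSX, hSm, hSW₁⟩, hSW⟩
  -- Nonemptiness
  obtain ⟨S₀, hS₀, -⟩ := key ⊥ (by rw [finrank_bot]; omega)
  have hne : 𝒮.Nonempty := ⟨S₀, hS₀⟩
  -- Intersecting
  have hint : IsIntersectingFamily 𝒮 := by
    intro A hA B hB
    obtain ⟨hAX, hAm, -⟩ := hA
    obtain ⟨hBX, hBm, -⟩ := hB
    have hsup : finrank F ↥(A ⊔ B) + finrank F ↥(A ⊓ B)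
        = finrank F ↥A + finrank F ↥B := Submodule.finrank_sup_add_finrank_inf_eq A B
    have hle : finrank F ↥(A ⊔ B) ≤ finrank F ↥X :=
      Submodule.finrank_mono (sup_le hAX hBX)
    omega
  refine ⟨hne, hint, ?_⟩
  -- Covering number
  have hmem : m ∈ { d : ℕ | ∃ W : Submodule F V, finrank F ↥W = d ∧
      ∀ A ∈ 𝒮, 1 ≤ finrank F ↥(W ⊓ A) } := by
    refine ⟨S₀, hS₀.2.1, fun A hA => hint S₀ hS₀ A hA⟩
  have hlb : ∀ d ∈ { d : ℕ | ∃ W : Submodule F V, finrank F ↥W = d ∧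
      ∀ A ∈ 𝒮, 1 ≤ finrank F ↥(W ⊓ A) }, m ≤ d := by
    rintro d ⟨W, hWd, hWcov⟩
    by_contra hdm
    push_neg at hdm
    obtain ⟨S, hS, hSW⟩ := key W (by omega)
    have hWS : W ⊓ S = ⊥ := by
      have hSX : S ≤ X := hS.1
      have : W ⊓ S = S ⊓ (W ⊓ X) := by
        rw [← inf_assoc, inf_comm S W, inf_eq_left.mpr (le_trans inf_le_right hSX)]
      rw [this, hSW]
    have := hWcov S hS
    rw [hWS, finrank_bot] at this
    omega
  exact le_antisymm (Nat.sInf_le hmem) (le_csInf ⟨m, hmem⟩ hlb)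
end
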